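/- arXiv:1807.01551 — 4 statements merged into one kernel-verified Lean document; each statement's English description precedes it below -/
import Mathlib

section
/- Let X be a clique complex on a vertex set V of size n such that μ_k(X) = 2(k+1) − n for some k. Then X is isomorphic to (Δ_1^{(0)})^{∗(n−k−1)} ∗ Δ_{2(k+1)−n−1}; in particular dim(X) = k. -/
open Matrix BigOperators

/-- A finite abstract simplicial complex on vertex type `V` (the empty face is included). -/
structure SC (V : Type) [DecidableEq V] where
  faces : Finset (Finset V)
  empty_mem : ∅ ∈ faces
  down_closed : ∀ σ ∈ faces, ∀ τ ⊆ σ, τ ∈ faces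

namespace SC

variable {V : Type} [Fintype V] [DecidableEq V] [LinearOrder V] (X : SC V)

/-- The degree of a simplex: the number of cofacets. -/
def deg (σ : Finset V) : ℕ :=
  (X.faces.filter fun η => σ ⊆ η ∧ η.card = σ.card + 1).card

/-- Faces with `m` vertices, i.e. of dimension `m - 1`. -/
abbrev face (m : ℕ) := {σ : Finset V // σ ∈ X.faces ∧ σ.card = m}

/-- `sgn σ τ` for `τ ⊆ σ` with `|σ \ τ| = 1`: the sign `(-1)^i` where `i` is the
position of the vertex of `σ \ τ` in the increasing ordering of `σ`. -/
def sgn (σ τ : Finset V) : ℝ :=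
  ∑ u ∈ σ \ τ, (-1 : ℝ) ^ (σ.filter fun w => w < u).card

/-- The matrix of the simplicial coboundary map from `(m-1)`-cochains to `m`-cochains
(cochains are indexed by the number of vertices of the faces). -/
def CB (m : ℕ) : Matrix (X.face (m + 1)) (X.face m) ℝ :=
  fun σ τ => if τ.1 ⊆ σ.1 then sgn σ.1 τ.1 else 0

/-- The reduced Laplacian `L_{m-1} = d_{m-2} ∂_{m-2} + ∂_{m-1} d_{m-1}` acting on
cochains supported on faces with `m` vertices. -/
def Lap : (m : ℕ) → Matrix (X.face m) (X.face m) ℝ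
  | 0 => (X.CB 0)ᵀ * X.CB 0
  | m + 1 => (X.CB (m + 1))ᵀ * X.CB (m + 1) + X.CB m * (X.CB m)ᵀ

/-- The set of eigenvalues of the reduced Laplacian `L_{m-1}`. -/
def eigenvals (m : ℕ) : Set ℝ :=
  {μ | Module.End.HasEigenvalue (Matrix.toLin' (X.Lap m)) μ}

/-- The spectrum of the reduced Laplacian `L_{m-1}` as a multiset (roots of the
characteristic polynomial with multiplicity). -/
noncomputable def spec (m : ℕ) : Multiset ℝ := (X.Lap m).charpoly.roots

/-- The set of degrees of faces with `m` vertices. -/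
def degSet (m : ℕ) : Set ℕ := {N | ∃ σ ∈ X.faces, σ.card = m ∧ X.deg σ = N}

/-- All missing faces of `X` have dimension at most `d` (at most `d + 1` vertices). -/
def MissingBnd (d : ℕ) : Prop :=
  ∀ σ : Finset V, σ ∉ X.faces → (∀ τ ⊂ σ, τ ∈ X.faces) → σ.card ≤ d + 1

/-- `X` is a clique (flag) complex: any set of pairwise connected vertices is a face. -/
def Flag : Prop :=
  ∀ σ : Finset V, (∀ u ∈ σ, ∀ v ∈ σ, ({u, v} : Finset V) ∈ X.faces) → σ ∈ X.faces

/-- `φ` is a coboundary (an element of the image of the coboundary map). -/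
def IsCobound : (m : ℕ) → (X.face m → ℝ) → Prop
  | 0, φ => φ = 0
  | m + 1, φ => ∃ ψ : X.face m → ℝ, (X.CB m).mulVec ψ = φ

/-- The reduced cohomology with real coefficients vanishes in dimension `m - 1`:
every cocycle is a coboundary. -/
def Hvanish (m : ℕ) : Prop :=
  ∀ φ : X.face m → ℝ, (X.CB m).mulVec φ = 0 → X.IsCobound m φ

end SC

section
open Classical

/-- The complex `Z = (Δ_d^{(d-1)})^{∗t} ∗ Δ_{r-1}`: on vertex set
`(Fin t × Fin (d+1)) ⊕ Fin r`, a set is a face iff it misses at least one vertex from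
each of the `t` copies of the vertex set of `Δ_d` (no condition on the `Fin r` part). -/
noncomputable def Zcx (d t r : ℕ) : SC ((Fin t × Fin (d + 1)) ⊕ Fin r) where
  faces := Finset.univ.filter fun σ =>
    ∀ i : Fin t,
      (σ.filter fun v => Sum.elim (fun p => p.1 = i) (fun _ => False) v).card ≤ d
  empty_mem := by
    simp only [Finset.mem_filter, Finset.mem_univ, true_and]
    intro i
    simp
  down_closed := by
    intro σ hσ τ hτ
    simp only [Finset.mem_filter, Finset.mem_univ, true_and] at hσ ⊢
    intro i
    exact le_trans (Finset.card_le_card (Finset.filter_subset_filter _ hτ)) (hσ i)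

end

noncomputable instance (d t r : ℕ) : LinearOrder ((Fin t × Fin (d + 1)) ⊕ Fin r) :=
  LinearOrder.lift' (Fintype.equivFin _) (Equiv.injective _)

namespace CliqueEqAux

open Matrix BigOperators Finset

variable {V : Type} [Fintype V] [DecidableEq V] [LinearOrder V]

noncomputable def eps (η : Finset V) (z : V) : ℝ := (-1 : ℝ) ^ (η.filter fun w => w < z).card

lemma eps_mul_self (η : Finset V) (z : V) : eps η z * eps η z = 1 := by
  unfold eps; rw [← pow_add]; exact Even.neg_one_pow ⟨_, rfl⟩

lemma eps_ne_zero (η : Finset V) (z : V) : eps η z ≠ 0 := by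
  intro h; have := eps_mul_self η z; rw [h, mul_zero] at this; norm_num at this

lemma sgn_erase {η : Finset V} {z : V} (h : z ∈ η) : SC.sgn η (η.erase z) = eps η z := by
  unfold SC.sgn eps; rw [Finset.sdiff_erase_self h, Finset.sum_singleton]

lemma sgn_insert {σ : Finset V} {w : V} (h : w ∉ σ) :
    SC.sgn (insert w σ) σ = eps (insert w σ) w := by
  have := sgn_erase (Finset.mem_insert_self w σ)
  rwa [Finset.erase_insert h] at this

lemma eps_erase {ζ : Finset V} {x : V} (hx : x ∈ ζ) (z : V) :
    eps (ζ.erase x) z = (if x < z then -1 else 1) * eps ζ z := by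
  unfold eps
  rw [Finset.filter_erase]
  by_cases h : x < z
  · have hxm : x ∈ ζ.filter fun w => w < z := Finset.mem_filter.2 ⟨hx, h⟩
    rw [Finset.card_erase_of_mem hxm, if_pos h]
    have h1 : 1 ≤ (ζ.filter fun w => w < z).card := Finset.card_pos.2 ⟨x, hxm⟩
    obtain ⟨c', hc'⟩ : ∃ c', (ζ.filter fun w => w < z).card = c' + 1 :=
      ⟨_, (Nat.sub_add_cancel h1).symm⟩
    rw [hc']
    simp [pow_succ]
  · rw [Finset.erase_eq_of_notMem, if_neg h, one_mul]
    intro hc; exact h (Finset.mem_filter.1 hc).2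

/-- The coboundary coefficient as a function on plain finsets. -/
noncomputable def cf (η σ : Finset V) : ℝ := if σ ⊆ η then SC.sgn η σ else 0

lemma exists_erase_of_card {σ η : Finset V} (hs : σ ⊆ η) (hc : η.card = σ.card + 1) :
    ∃ z ∈ η, z ∉ σ ∧ σ = η.erase z := by
  have h1 : (η \ σ).card = 1 := by
    rw [Finset.card_sdiff_of_subset hs, hc]; omega
  obtain ⟨z, hz⟩ := Finset.card_eq_one.1 h1
  have hzm : z ∈ η \ σ := by rw [hz]; exact Finset.mem_singleton_self z
  refine ⟨z, (Finset.mem_sdiff.1 hzm).1, (Finset.mem_sdiff.1 hzm).2, ?_⟩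
  apply Finset.eq_of_subset_of_card_le
  · intro a ha
    refine Finset.mem_erase.2 ⟨?_, hs ha⟩
    intro he; subst he; exact (Finset.mem_sdiff.1 hzm).2 ha
  · rw [Finset.card_erase_of_mem (Finset.mem_sdiff.1 hzm).1, hc]; omega

lemma sgn_of_subset {σ η : Finset V} (hs : σ ⊆ η) (hc : η.card = σ.card + 1) :
    ∃ z ∈ η, z ∉ σ ∧ σ = η.erase z ∧ SC.sgn η σ = eps η z := by
  obtain ⟨z, hz1, hz2, hz3⟩ := exists_erase_of_card hs hc
  exact ⟨z, hz1, hz2, hz3, by rw [hz3]; exact sgn_erase hz1⟩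

lemma cf_mul_self {σ η : Finset V} (hσ : σ.card + 1 = η.card) :
    cf η σ * cf η σ = if σ ⊆ η then 1 else 0 := by
  unfold cf
  by_cases h : σ ⊆ η
  · rw [if_pos h, if_pos h]
    obtain ⟨z, _, _, _, he⟩ := sgn_of_subset h hσ.symm
    rw [he]; exact eps_mul_self η z
  · simp [h]

lemma supersets_eq_image (σ : Finset V) :
    ((Finset.univ.powersetCard (σ.card + 1)).filter fun η => σ ⊆ η)
      = (Finset.univ \ σ).image (fun w => insert w σ) := by
  ext η
  simp only [Finset.mem_filter, Finset.mem_powersetCard, Finset.mem_image, Finset.mem_sdiff,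
    Finset.mem_univ, true_and]
  constructor
  · rintro ⟨⟨-, hc⟩, hs⟩
    obtain ⟨z, hz1, hz2, hz3⟩ := exists_erase_of_card hs hc
    exact ⟨z, hz2, by rw [hz3, Finset.insert_erase hz1]⟩
  · rintro ⟨w, hw, rfl⟩
    exact ⟨⟨Finset.subset_univ _, by rw [Finset.card_insert_of_notMem hw]⟩,
      Finset.subset_insert _ _⟩

lemma card_supersets (σ : Finset V) :
    (((Finset.univ : Finset V).powersetCard (σ.card + 1)).filter fun η => σ ⊆ η).card
      = Fintype.card V - σ.card := by
  rw [supersets_eq_image, Finset.card_image_of_injOn, Finset.card_sdiff_of_subset (Finset.subset_univ σ),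
    Finset.card_univ]
  intro a ha b hb hab
  simp only at hab
  have : a ∈ insert b σ := by rw [← hab]; exact Finset.mem_insert_self a σ
  rcases Finset.mem_insert.1 this with h | h
  · exact h
  · exact absurd h (Finset.mem_sdiff.1 (Finset.mem_coe.1 ha)).2

end CliqueEqAux
namespace CliqueEqAux
open Matrix BigOperators Finset
variable {V : Type} [Fintype V] [DecidableEq V] [LinearOrder V]

lemma subsets_eq_powersetCard (σ : Finset V) (j : ℕ) :
    (((Finset.univ : Finset V).powersetCard j).filter fun τ => τ ⊆ σ) = σ.powersetCard j := by
  ext τ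
  simp only [Finset.mem_filter, Finset.mem_powersetCard, Finset.mem_univ, true_and]
  exact ⟨fun h => ⟨h.2, h.1.2⟩, fun h => ⟨⟨Finset.subset_univ τ, h.2⟩, h.1⟩⟩

lemma entrywise (k : ℕ) (σ₁ σ₂ : Finset V) (h1 : σ₁.card = k + 1) (h2 : σ₂.card = k + 1) :
    ((∑ η ∈ (Finset.univ : Finset V).powersetCard (k + 2), cf η σ₁ * cf η σ₂)
      + ∑ τ ∈ (Finset.univ : Finset V).powersetCard k, cf σ₁ τ * cf σ₂ τ)
      = if σ₁ = σ₂ then (Fintype.card V : ℝ) else 0 := by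
  have hn : k + 1 ≤ Fintype.card V := by
    rw [← h1, ← Finset.card_univ]; exact Finset.card_le_card (Finset.subset_univ _)
  by_cases hEq : σ₁ = σ₂
  · subst hEq
    rw [if_pos rfl]
    have e1 : ∑ η ∈ (Finset.univ : Finset V).powersetCard (k + 2), cf η σ₁ * cf η σ₁
        = ((Fintype.card V - (k + 1) : ℕ) : ℝ) := by
      rw [Finset.sum_congr rfl (fun η hη => cf_mul_self
        (by rw [h1, (Finset.mem_powersetCard.1 hη).2])), Finset.sum_boole]
      have : k + 2 = σ₁.card + 1 := by omega
      rw [this, card_supersets, h1]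
    have e2 : ∑ τ ∈ (Finset.univ : Finset V).powersetCard k, cf σ₁ τ * cf σ₁ τ
        = ((k + 1 : ℕ) : ℝ) := by
      have : ∀ τ ∈ (Finset.univ : Finset V).powersetCard k, cf σ₁ τ * cf σ₁ τ
          = if τ ⊆ σ₁ then (1 : ℝ) else 0 := fun τ hτ => cf_mul_self
        (by rw [(Finset.mem_powersetCard.1 hτ).2, h1])
      rw [Finset.sum_congr rfl this, Finset.sum_boole, subsets_eq_powersetCard,
        Finset.card_powersetCard, h1]
      norm_num [Nat.choose_succ_self_right]
    rw [e1, e2]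
    push_cast [Nat.cast_sub hn]
    ring
  · rw [if_neg hEq]
    by_cases hcap : (σ₁ ∩ σ₂).card = k
    · -- exactly one common facet / cofacet; signs cancel
      obtain ⟨x, hx⟩ : ∃ x, σ₁ \ σ₂ = {x} := by
        apply Finset.card_eq_one.1
        have := Finset.card_inter_add_card_sdiff σ₁ σ₂
        omega
      obtain ⟨y, hy⟩ : ∃ y, σ₂ \ σ₁ = {y} := by
        apply Finset.card_eq_one.1
        have := Finset.card_inter_add_card_sdiff σ₂ σ₁
        rw [Finset.inter_comm] at this
        omega
      have hxy : x ≠ y := by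
        intro h
        have hx1 : x ∈ σ₁ \ σ₂ := by rw [hx]; exact Finset.mem_singleton_self x
        have hy1 : y ∈ σ₂ \ σ₁ := by rw [hy]; exact Finset.mem_singleton_self y
        rw [← h] at hy1
        exact (Finset.mem_sdiff.1 hy1).2 (Finset.mem_sdiff.1 hx1).1
      have hη₀c : (σ₁ ∪ σ₂).card = k + 2 := by
        have := Finset.card_union_add_card_inter σ₁ σ₂
        omega
      have hτs1 : (σ₁ ∩ σ₂) ⊆ σ₁ := Finset.inter_subset_left
      have hτs2 : (σ₁ ∩ σ₂) ⊆ σ₂ := Finset.inter_subset_right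
      have hd1 : (σ₁ ∪ σ₂) \ σ₁ = {y} := by
        rw [Finset.union_sdiff_left]; exact hy
      have hd2 : (σ₁ ∪ σ₂) \ σ₂ = {x} := by
        rw [Finset.union_sdiff_right]; exact hx
      have hd3 : σ₁ \ (σ₁ ∩ σ₂) = {x} := by rw [Finset.sdiff_inter_self_left]; exact hx
      have hd4 : σ₂ \ (σ₁ ∩ σ₂) = {y} := by
        rw [Finset.inter_comm, Finset.sdiff_inter_self_left]; exact hy
      have hyη : y ∈ (σ₁ ∪ σ₂) := Finset.subset_union_right (by
        have : y ∈ σ₂ \ σ₁ := by rw [hy]; exact Finset.mem_singleton_self y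
        exact (Finset.mem_sdiff.1 this).1)
      have hxη : x ∈ (σ₁ ∪ σ₂) := Finset.subset_union_left (by
        have : x ∈ σ₁ \ σ₂ := by rw [hx]; exact Finset.mem_singleton_self x
        exact (Finset.mem_sdiff.1 this).1)
      have hxσ1 : x ∈ σ₁ := by
        have : x ∈ σ₁ \ σ₂ := by rw [hx]; exact Finset.mem_singleton_self x
        exact (Finset.mem_sdiff.1 this).1
      have hyσ2 : y ∈ σ₂ := by
        have : y ∈ σ₂ \ σ₁ := by rw [hy]; exact Finset.mem_singleton_self y
        exact (Finset.mem_sdiff.1 this).1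
      have he1 : σ₁ = (σ₁ ∪ σ₂).erase y := by
        rw [Finset.erase_eq, ← hd1, Finset.sdiff_sdiff_eq_self Finset.subset_union_left]
      have he2 : σ₂ = (σ₁ ∪ σ₂).erase x := by
        rw [Finset.erase_eq, ← hd2, Finset.sdiff_sdiff_eq_self Finset.subset_union_right]
      have he3 : (σ₁ ∩ σ₂) = σ₁.erase x := by
        rw [Finset.erase_eq, ← hd3, Finset.sdiff_sdiff_eq_self hτs1]
      have he4 : (σ₁ ∩ σ₂) = σ₂.erase y := by
        rw [Finset.erase_eq, ← hd4, Finset.sdiff_sdiff_eq_self hτs2]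
      have s1 : ∑ η ∈ (Finset.univ : Finset V).powersetCard (k + 2), cf η σ₁ * cf η σ₂
          = cf (σ₁ ∪ σ₂) σ₁ * cf (σ₁ ∪ σ₂) σ₂ := by
        apply Finset.sum_eq_single_of_mem
        · exact Finset.mem_powersetCard.2 ⟨Finset.subset_univ _, hη₀c⟩
        · intro η hη hne
          unfold cf
          by_cases hs1 : σ₁ ⊆ η
          · by_cases hs2 : σ₂ ⊆ η
            · exfalso
              apply hne
              apply (Finset.eq_of_subset_of_card_le (Finset.union_subset hs1 hs2) ?_).symm
              rw [hη₀c, (Finset.mem_powersetCard.1 hη).2]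
            · rw [if_neg hs2, mul_zero]
          · rw [if_neg hs1, zero_mul]
      have s2 : ∑ τ ∈ (Finset.univ : Finset V).powersetCard k, cf σ₁ τ * cf σ₂ τ
          = cf σ₁ (σ₁ ∩ σ₂) * cf σ₂ (σ₁ ∩ σ₂) := by
        apply Finset.sum_eq_single_of_mem
        · exact Finset.mem_powersetCard.2 ⟨Finset.subset_univ _, hcap⟩
        · intro τ hτ hne
          unfold cf
          by_cases hs1 : τ ⊆ σ₁
          · by_cases hs2 : τ ⊆ σ₂
            · exfalso
              apply hne
              apply Finset.eq_of_subset_of_card_le (Finset.subset_inter hs1 hs2)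
              rw [hcap, (Finset.mem_powersetCard.1 hτ).2]
            · rw [if_neg hs2, mul_zero]
          · rw [if_neg hs1, zero_mul]
      rw [s1, s2]
      unfold cf
      rw [if_pos Finset.subset_union_left, if_pos Finset.subset_union_right,
        if_pos hτs1, if_pos hτs2]
      have g1 : SC.sgn (σ₁ ∪ σ₂) σ₁ = eps (σ₁ ∪ σ₂) y := by
        have := sgn_erase hyη; rwa [← he1] at this
      have g2 : SC.sgn (σ₁ ∪ σ₂) σ₂ = eps (σ₁ ∪ σ₂) x := by
        have := sgn_erase hxη; rwa [← he2] at this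
      have g3 : SC.sgn σ₁ (σ₁ ∩ σ₂) = eps σ₁ x := by
        have := sgn_erase hxσ1; rwa [← he3] at this
      have g4 : SC.sgn σ₂ (σ₁ ∩ σ₂) = eps σ₂ y := by
        have := sgn_erase hyσ2; rwa [← he4] at this
      rw [g1, g2, g3, g4]
      have g5 : eps σ₁ x = (if y < x then -1 else 1) * eps (σ₁ ∪ σ₂) x := by
        have := eps_erase hyη x; rwa [← he1] at this
      have g6 : eps σ₂ y = (if x < y then -1 else 1) * eps (σ₁ ∪ σ₂) y := by
        have := eps_erase hxη y; rwa [← he2] at this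
      rw [g5, g6]
      rcases lt_or_gt_of_ne hxy with h | h
      · rw [if_pos h, if_neg (not_lt.2 h.le)]; ring
      · rw [if_neg (not_lt.2 h.le), if_pos h]; ring
    · -- no common coface/subface: all terms vanish
      have hle : (σ₁ ∩ σ₂).card ≤ k := by
        rcases Nat.lt_or_ge (σ₁ ∩ σ₂).card (k + 1) with h | h
        · omega
        · exfalso
          apply hEq
          have h1' : σ₁ ∩ σ₂ = σ₁ := Finset.eq_of_subset_of_card_le Finset.inter_subset_left
            (by omega)
          have h2' : σ₁ ∩ σ₂ = σ₂ := Finset.eq_of_subset_of_card_le Finset.inter_subset_right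
            (by omega)
          rw [← h1', h2']
      have hlt : (σ₁ ∩ σ₂).card < k := by omega
      have z1 : ∑ η ∈ (Finset.univ : Finset V).powersetCard (k + 2), cf η σ₁ * cf η σ₂ = 0 := by
        apply Finset.sum_eq_zero
        intro η hη
        unfold cf
        by_cases hs1 : σ₁ ⊆ η
        · by_cases hs2 : σ₂ ⊆ η
          · exfalso
            have hu : σ₁ ∪ σ₂ ⊆ η := Finset.union_subset hs1 hs2
            have := Finset.card_le_card hu
            have := Finset.card_union_add_card_inter σ₁ σ₂
            rw [(Finset.mem_powersetCard.1 hη).2] at *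
            omega
          · rw [if_neg hs2, mul_zero]
        · rw [if_neg hs1, zero_mul]
      have z2 : ∑ τ ∈ (Finset.univ : Finset V).powersetCard k, cf σ₁ τ * cf σ₂ τ = 0 := by
        apply Finset.sum_eq_zero
        intro τ hτ
        unfold cf
        by_cases hs1 : τ ⊆ σ₁
        · by_cases hs2 : τ ⊆ σ₂
          · exfalso
            have := Finset.card_le_card (Finset.subset_inter hs1 hs2)
            rw [(Finset.mem_powersetCard.1 hτ).2] at this
            omega
          · rw [if_neg hs2, mul_zero]
        · rw [if_neg hs1, zero_mul]
      rw [z1, z2, add_zero]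

end CliqueEqAux
namespace CliqueEqAux
open Matrix BigOperators Finset
variable {V : Type} [Fintype V] [DecidableEq V] [LinearOrder V]

lemma sq_expand (s : Finset (Finset V)) (P : Finset (Finset V)) (F : Finset V → Finset V → ℝ)
    (ψ : Finset V → ℝ) :
    ∑ b ∈ s, (∑ σ ∈ P, F b σ * ψ σ) ^ 2
      = ∑ σ₁ ∈ P, ∑ σ₂ ∈ P, (ψ σ₁ * ψ σ₂) * ∑ b ∈ s, F b σ₁ * F b σ₂ := by
  have h1 : ∀ b, (∑ σ ∈ P, F b σ * ψ σ) ^ 2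
      = ∑ σ₁ ∈ P, ∑ σ₂ ∈ P, (ψ σ₁ * ψ σ₂) * (F b σ₁ * F b σ₂) := by
    intro b
    rw [sq, Finset.sum_mul_sum]
    apply Finset.sum_congr rfl; intro σ₁ _
    apply Finset.sum_congr rfl; intro σ₂ _
    ring
  rw [Finset.sum_congr rfl fun b _ => h1 b]
  rw [Finset.sum_comm]
  apply Finset.sum_congr rfl; intro σ₁ _
  rw [Finset.sum_comm]
  apply Finset.sum_congr rfl; intro σ₂ _
  rw [← Finset.mul_sum]

lemma parseval (k : ℕ) (ψ : Finset V → ℝ) :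
    (∑ η ∈ (Finset.univ : Finset V).powersetCard (k + 2),
        (∑ σ ∈ (Finset.univ : Finset V).powersetCard (k + 1), cf η σ * ψ σ) ^ 2)
      + (∑ τ ∈ (Finset.univ : Finset V).powersetCard k,
        (∑ σ ∈ (Finset.univ : Finset V).powersetCard (k + 1), cf σ τ * ψ σ) ^ 2)
      = (Fintype.card V : ℝ)
        * ∑ σ ∈ (Finset.univ : Finset V).powersetCard (k + 1), ψ σ ^ 2 := by
  rw [sq_expand _ _ (fun b σ => cf b σ) ψ, sq_expand _ _ (fun b σ => cf σ b) ψ,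
    ← Finset.sum_add_distrib]
  have : ∀ σ₁ ∈ (Finset.univ : Finset V).powersetCard (k + 1),
      ((∑ σ₂ ∈ (Finset.univ : Finset V).powersetCard (k + 1), (ψ σ₁ * ψ σ₂)
          * ∑ b ∈ (Finset.univ : Finset V).powersetCard (k + 2), cf b σ₁ * cf b σ₂)
        + ∑ σ₂ ∈ (Finset.univ : Finset V).powersetCard (k + 1), (ψ σ₁ * ψ σ₂)
          * ∑ b ∈ (Finset.univ : Finset V).powersetCard k, cf σ₁ b * cf σ₂ b)
        = (Fintype.card V : ℝ) * ψ σ₁ ^ 2 := by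
    intro σ₁ hσ₁
    rw [← Finset.sum_add_distrib]
    have h2 : ∀ σ₂ ∈ (Finset.univ : Finset V).powersetCard (k + 1),
        ((ψ σ₁ * ψ σ₂) * ∑ b ∈ (Finset.univ : Finset V).powersetCard (k + 2), cf b σ₁ * cf b σ₂
          + (ψ σ₁ * ψ σ₂) * ∑ b ∈ (Finset.univ : Finset V).powersetCard k, cf σ₁ b * cf σ₂ b)
        = if σ₁ = σ₂ then (Fintype.card V : ℝ) * ψ σ₁ ^ 2 else 0 := by
      intro σ₂ hσ₂
      rw [← mul_add, entrywise k σ₁ σ₂ (Finset.mem_powersetCard.1 hσ₁).2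
        (Finset.mem_powersetCard.1 hσ₂).2]
      by_cases h : σ₁ = σ₂
      · subst h; rw [if_pos rfl, if_pos rfl]; ring
      · rw [if_neg h, if_neg h, mul_zero]
    rw [Finset.sum_congr rfl h2, Finset.sum_ite_eq _ σ₁ _, if_pos hσ₁]
  rw [Finset.sum_congr rfl this, ← Finset.mul_sum]

end CliqueEqAux
namespace CliqueEqAux
open Matrix BigOperators Finset
variable {V : Type} [Fintype V] [DecidableEq V] [LinearOrder V] (X : SC V)

/-- Extension of a cochain by zero to all finsets. -/
noncomputable def psi (k : ℕ) (φ : X.face (k+1) → ℝ) : Finset V → ℝ :=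
  fun σ => if h : σ ∈ X.faces ∧ σ.card = k + 1 then φ ⟨σ, h⟩ else 0

lemma psi_spec (k : ℕ) (φ : X.face (k+1) → ℝ) (sh : X.face (k+1)) :
    psi X k φ sh.1 = φ sh := by
  unfold psi; rw [dif_pos sh.2]

lemma psi_eq_zero (k : ℕ) (φ : X.face (k+1) → ℝ) {σ : Finset V}
    (h : ¬ (σ ∈ X.faces ∧ σ.card = k + 1)) : psi X k φ σ = 0 := by
  unfold psi; rw [dif_neg h]

lemma sum_face (j : ℕ) (g : Finset V → ℝ) :
    ∑ sh : X.face j, g sh.1 = ∑ σ ∈ X.faces.filter (fun σ => σ.card = j), g σ :=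
  (Finset.sum_subtype (X.faces.filter (fun σ => σ.card = j))
    (fun σ => by simp [Finset.mem_filter]) g).symm

lemma filter_subset_P (j : ℕ) :
    X.faces.filter (fun σ => σ.card = j) ⊆ (Finset.univ : Finset V).powersetCard j := by
  intro σ hσ
  exact Finset.mem_powersetCard.2 ⟨Finset.subset_univ _, (Finset.mem_filter.1 hσ).2⟩

lemma sum_psi_sq (k : ℕ) (φ : X.face (k+1) → ℝ) :
    ∑ σ ∈ (Finset.univ : Finset V).powersetCard (k+1), psi X k φ σ ^ 2
      = ∑ sh : X.face (k+1), φ sh ^ 2 := by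
  have e1 : ∑ sh : X.face (k+1), φ sh ^ 2 = ∑ sh : X.face (k+1), psi X k φ sh.1 ^ 2 :=
    Finset.sum_congr rfl (fun sh _ => by rw [psi_spec])
  rw [e1, sum_face X (k+1) (fun σ => psi X k φ σ ^ 2)]
  apply (Finset.sum_subset (filter_subset_P X (k+1)) ?_).symm
  intro σ _ hσ
  rw [psi_eq_zero X k φ (fun h => hσ (Finset.mem_filter.2 ⟨h.1, h.2⟩))]
  norm_num

/-- The coboundary of the extended cochain. -/
noncomputable def Df (k : ℕ) (φ : X.face (k+1) → ℝ) (η : Finset V) : ℝ :=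
  ∑ σ ∈ (Finset.univ : Finset V).powersetCard (k+1), cf η σ * psi X k φ σ

/-- The boundary of the extended cochain. -/
noncomputable def Bf (k : ℕ) (φ : X.face (k+1) → ℝ) (τ : Finset V) : ℝ :=
  ∑ σ ∈ (Finset.univ : Finset V).powersetCard (k+1), cf σ τ * psi X k φ σ

lemma mulVec_CB_eq (k : ℕ) (φ : X.face (k+1) → ℝ) (eh : X.face (k+2)) :
    (X.CB (k+1)).mulVec φ eh = Df X k φ eh.1 := by
  unfold Matrix.mulVec dotProduct Df
  have e1 : ∀ sh : X.face (k+1), X.CB (k+1) eh sh * φ sh = cf eh.1 sh.1 * psi X k φ sh.1 := by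
    intro sh; rw [psi_spec]; rfl
  rw [Finset.sum_congr rfl (fun sh _ => e1 sh), sum_face X (k+1) (fun σ => cf eh.1 σ * psi X k φ σ)]
  apply Finset.sum_subset (filter_subset_P X (k+1))
  intro σ _ hσ
  rw [psi_eq_zero X k φ (fun h => hσ (Finset.mem_filter.2 ⟨h.1, h.2⟩)), mul_zero]

lemma mulVec_CBT_eq (k : ℕ) (φ : X.face (k+1) → ℝ) (th : X.face k) :
    ((X.CB k)ᵀ).mulVec φ th = Bf X k φ th.1 := by
  unfold Matrix.mulVec dotProduct Bf
  have e1 : ∀ sh : X.face (k+1), (X.CB k)ᵀ th sh * φ sh = cf sh.1 th.1 * psi X k φ sh.1 := by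
    intro sh; rw [psi_spec]; rfl
  rw [Finset.sum_congr rfl (fun sh _ => e1 sh), sum_face X (k+1) (fun σ => cf σ th.1 * psi X k φ σ)]
  apply Finset.sum_subset (filter_subset_P X (k+1))
  intro σ _ hσ
  rw [psi_eq_zero X k φ (fun h => hσ (Finset.mem_filter.2 ⟨h.1, h.2⟩)), mul_zero]

lemma Bf_eq_zero_of_not_face (k : ℕ) (φ : X.face (k+1) → ℝ) {τ : Finset V}
    (h : τ ∉ X.faces) : Bf X k φ τ = 0 := by
  unfold Bf
  apply Finset.sum_eq_zero
  intro σ _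
  by_cases hτσ : τ ⊆ σ
  · by_cases hσf : σ ∈ X.faces ∧ σ.card = k + 1
    · exact absurd (X.down_closed σ hσf.1 τ hτσ) h
    · rw [psi_eq_zero X k φ hσf, mul_zero]
  · unfold cf; rw [if_neg hτσ, zero_mul]

lemma sum_up_eq (k : ℕ) (φ : X.face (k+1) → ℝ) :
    ∑ eh : X.face (k+2), ((X.CB (k+1)).mulVec φ eh) ^ 2
      = ∑ η ∈ X.faces.filter (fun η => η.card = k + 2), Df X k φ η ^ 2 := by
  rw [Finset.sum_congr rfl (fun eh _ => by rw [mulVec_CB_eq X k φ eh]),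
    sum_face X (k+2) (fun η => Df X k φ η ^ 2)]

lemma sum_down_eq (k : ℕ) (φ : X.face (k+1) → ℝ) :
    ∑ th : X.face k, (((X.CB k)ᵀ).mulVec φ th) ^ 2
      = ∑ τ ∈ (Finset.univ : Finset V).powersetCard k, Bf X k φ τ ^ 2 := by
  rw [Finset.sum_congr rfl (fun th _ => by rw [mulVec_CBT_eq X k φ th]),
    sum_face X k (fun τ => Bf X k φ τ ^ 2)]
  apply Finset.sum_subset (filter_subset_P X k)
  intro τ hτP hτ
  by_cases hf : τ ∈ X.faces
  · exact absurd (Finset.mem_filter.2 ⟨hf, (Finset.mem_powersetCard.1 hτP).2⟩) hτ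
  · rw [Bf_eq_zero_of_not_face X k φ hf]; norm_num

lemma quad_form (k : ℕ) (φ : X.face (k+1) → ℝ) :
    φ ⬝ᵥ (X.Lap (k+1)).mulVec φ
      = (∑ eh : X.face (k+2), ((X.CB (k+1)).mulVec φ eh) ^ 2)
        + ∑ th : X.face k, (((X.CB k)ᵀ).mulVec φ th) ^ 2 := by
  show φ ⬝ᵥ ((X.CB (k+1))ᵀ * X.CB (k+1) + X.CB k * (X.CB k)ᵀ).mulVec φ = _
  rw [Matrix.add_mulVec, dotProduct_add]
  congr 1
  · rw [← Matrix.mulVec_mulVec, Matrix.dotProduct_mulVec, Matrix.vecMul_transpose]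
    unfold dotProduct
    exact Finset.sum_congr rfl fun eh _ => (sq _).symm
  · rw [← Matrix.mulVec_mulVec, Matrix.dotProduct_mulVec]
    have : φ ᵥ* X.CB k = (X.CB k)ᵀ.mulVec φ := by
      conv_lhs => rw [← Matrix.transpose_transpose (X.CB k)]
      rw [Matrix.vecMul_transpose]
    rw [this]
    unfold dotProduct
    exact Finset.sum_congr rfl fun th _ => (sq _).symm

/-- The non-faces of cardinality `k+2`. -/
def NF (k : ℕ) : Finset (Finset V) :=
  ((Finset.univ : Finset V).powersetCard (k+2)).filter (fun η => η ∉ X.faces)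

lemma grand_identity (k : ℕ) (φ : X.face (k+1) → ℝ) :
    φ ⬝ᵥ (X.Lap (k+1)).mulVec φ
      = (Fintype.card V : ℝ) * (∑ sh : X.face (k+1), φ sh ^ 2)
        - ∑ η ∈ NF X k, Df X k φ η ^ 2 := by
  have split : (∑ η ∈ X.faces.filter (fun η => η.card = k + 2), Df X k φ η ^ 2)
      + ∑ η ∈ NF X k, Df X k φ η ^ 2
      = ∑ η ∈ (Finset.univ : Finset V).powersetCard (k+2), Df X k φ η ^ 2 := by
    have e : X.faces.filter (fun η => η.card = k + 2)
        = ((Finset.univ : Finset V).powersetCard (k+2)).filter (fun η => η ∈ X.faces) := by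
      ext η
      simp only [Finset.mem_filter, Finset.mem_powersetCard, Finset.mem_univ, true_and]
      exact ⟨fun h => ⟨⟨Finset.subset_univ _, h.2⟩, h.1⟩, fun h => ⟨h.2, h.1.2⟩⟩
    rw [e]
    exact Finset.sum_filter_add_sum_filter_not _ _ _
  have par := parseval k (psi X k φ)
  rw [quad_form X k φ, sum_up_eq X k φ, sum_down_eq X k φ, sum_psi_sq X k φ] at *
  have par' : (∑ η ∈ (Finset.univ : Finset V).powersetCard (k+2), Df X k φ η ^ 2)
      + (∑ τ ∈ (Finset.univ : Finset V).powersetCard k, Bf X k φ τ ^ 2)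
      = (Fintype.card V : ℝ) * ∑ sh : X.face (k + 1), φ sh ^ 2 := par
  linarith [par', split]

end CliqueEqAux
namespace CliqueEqAux
open Matrix BigOperators Finset
variable {V : Type} [Fintype V] [DecidableEq V] [LinearOrder V] (X : SC V)

lemma pair_self (u : V) : ({u, u} : Finset V) = {u} := by simp

lemma missing_pair (hflag : X.Flag) (hvert : ∀ v : V, {v} ∈ X.faces) {η : Finset V}
    (h : η ∉ X.faces) : ∃ p ∈ η, ∃ q ∈ η, p ≠ q ∧ ({p, q} : Finset V) ∉ X.faces := by
  by_contra hc
  push_neg at hc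
  apply h
  apply hflag
  intro u hu v hv
  by_cases huv : u = v
  · subst huv; rw [pair_self]; exact hvert u
  · exact hc u hu v hv huv

def Sf (k : ℕ) (η : Finset V) : Finset (Finset V) :=
  (η.powersetCard (k+1)).filter (fun σ => σ ∈ X.faces)

lemma Sf_subset_pair {k : ℕ} {η : Finset V} (hηc : η.card = k + 2) {p q : V}
    (hp : p ∈ η) (hq : q ∈ η) (hmiss : ({p, q} : Finset V) ∉ X.faces) :
    Sf X k η ⊆ {η.erase p, η.erase q} := by
  intro σ hσ
  obtain ⟨hσs, hσf⟩ := Finset.mem_filter.1 hσ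
  obtain ⟨hσsub, hσc⟩ := Finset.mem_powersetCard.1 hσs
  obtain ⟨z, hz1, hz2, hz3⟩ := exists_erase_of_card hσsub (by omega)
  have hz4 : z = p ∨ z = q := by
    by_contra hzc
    push_neg at hzc
    apply hmiss
    apply X.down_closed σ hσf
    rw [Finset.insert_subset_iff, Finset.singleton_subset_iff, hz3]
    exact ⟨Finset.mem_erase.2 ⟨fun he => hzc.1 he.symm, hp⟩,
      Finset.mem_erase.2 ⟨fun he => hzc.2 he.symm, hq⟩⟩
  rcases hz4 with rfl | rfl
  · rw [hz3]; exact Finset.mem_insert_self _ _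
  · rw [hz3]; exact Finset.mem_insert.2 (Or.inr (Finset.mem_singleton_self _))

lemma Sf_subset_P (k : ℕ) (η : Finset V) :
    Sf X k η ⊆ (Finset.univ : Finset V).powersetCard (k+1) := by
  intro σ hσ
  exact Finset.mem_powersetCard.2 ⟨Finset.subset_univ _,
    (Finset.mem_powersetCard.1 (Finset.mem_filter.1 hσ).1).2⟩

lemma Df_eq_sum_Sf (k : ℕ) (φ : X.face (k+1) → ℝ) {η : Finset V} :
    Df X k φ η = ∑ σ ∈ Sf X k η, SC.sgn η σ * psi X k φ σ := by
  unfold Df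
  rw [← Finset.sum_subset (Sf_subset_P X k η) ?_]
  · apply Finset.sum_congr rfl
    intro σ hσ
    unfold cf
    rw [if_pos (Finset.mem_powersetCard.1 (Finset.mem_filter.1 hσ).1).1]
  · intro σ hσP hσ
    by_cases hsub : σ ⊆ η
    · by_cases hf : σ ∈ X.faces
      · exact absurd (Finset.mem_filter.2 ⟨Finset.mem_powersetCard.2
          ⟨hsub, (Finset.mem_powersetCard.1 hσP).2⟩, hf⟩) hσ
      · rw [psi_eq_zero X k φ (fun hh => hf hh.1), mul_zero]
    · unfold cf; rw [if_neg hsub, zero_mul]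

lemma sgn_sq_of_mem_Sf (k : ℕ) {η σ : Finset V} (hηc : η.card = k + 2)
    (hσ : σ ∈ Sf X k η) : SC.sgn η σ * SC.sgn η σ = 1 := by
  obtain ⟨hσsub, hσc⟩ := Finset.mem_powersetCard.1 (Finset.mem_filter.1 hσ).1
  obtain ⟨z, hz1, hz2, hz3, hz4⟩ := sgn_of_subset hσsub (by omega)
  rw [hz4]; exact eps_mul_self η z

lemma Df_sq_le (hflag : X.Flag) (hvert : ∀ v : V, {v} ∈ X.faces) (k : ℕ)
    (φ : X.face (k+1) → ℝ) {η : Finset V} (hη : η ∈ NF X k) :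
    Df X k φ η ^ 2 ≤ 2 * ∑ σ ∈ Sf X k η, psi X k φ σ ^ 2 := by
  obtain ⟨hηP, hηf⟩ := Finset.mem_filter.1 hη
  obtain ⟨-, hηc⟩ := Finset.mem_powersetCard.1 hηP
  obtain ⟨p, hp, q, hq, hpq, hmiss⟩ := missing_pair X hflag hvert hηf
  have hcard : (Sf X k η).card ≤ 2 :=
    le_trans (Finset.card_le_card (Sf_subset_pair X hηc hp hq hmiss))
      (le_trans (Finset.card_insert_le _ _) (by simp))
  have hsq : ∀ σ ∈ Sf X k η, (SC.sgn η σ * psi X k φ σ) ^ 2 = psi X k φ σ ^ 2 := by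
    intro σ hσ
    have := sgn_sq_of_mem_Sf X k hηc hσ
    nlinarith [this]
  calc Df X k φ η ^ 2
      = (∑ σ ∈ Sf X k η, SC.sgn η σ * psi X k φ σ) ^ 2 := by rw [Df_eq_sum_Sf]
    _ ≤ (Sf X k η).card * ∑ σ ∈ Sf X k η, (SC.sgn η σ * psi X k φ σ) ^ 2 :=
        sq_sum_le_card_mul_sum_sq
    _ = (Sf X k η).card * ∑ σ ∈ Sf X k η, psi X k φ σ ^ 2 := by
        rw [Finset.sum_congr rfl hsq]
    _ ≤ 2 * ∑ σ ∈ Sf X k η, psi X k φ σ ^ 2 := by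
        apply mul_le_mul_of_nonneg_right _ (Finset.sum_nonneg fun σ _ => sq_nonneg _)
        exact_mod_cast hcard

lemma sum_Sf_eq (k : ℕ) (φ : X.face (k+1) → ℝ) {η : Finset V} (hηc : η.card = k + 2) :
    ∑ σ ∈ Sf X k η, psi X k φ σ ^ 2
      = ∑ σ ∈ (Finset.univ : Finset V).powersetCard (k+1),
          (if σ ⊆ η then psi X k φ σ ^ 2 else 0) := by
  rw [Finset.sum_ite, Finset.sum_const_zero, add_zero, subsets_eq_powersetCard]
  apply Finset.sum_subset
  · intro σ hσ; exact (Finset.mem_filter.1 hσ).1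
  · intro σ hσ hσ'
    have : σ ∉ X.faces := fun hf => hσ' (Finset.mem_filter.2 ⟨hσ, hf⟩)
    rw [psi_eq_zero X k φ (fun hh => this hh.1)]
    norm_num

lemma chain_ineq (hflag : X.Flag) (hvert : ∀ v : V, {v} ∈ X.faces) (k : ℕ)
    (φ : X.face (k+1) → ℝ)
    (htot : ∑ η ∈ NF X k, Df X k φ η ^ 2
      = 2 * ((Fintype.card V - (k+1) : ℕ) : ℝ)
        * ∑ σ ∈ (Finset.univ : Finset V).powersetCard (k+1), psi X k φ σ ^ 2) :
    (∀ η ∈ NF X k, Df X k φ η ^ 2 = 2 * ∑ σ ∈ Sf X k η, psi X k φ σ ^ 2) ∧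
    (∀ σ ∈ (Finset.univ : Finset V).powersetCard (k+1),
      psi X k φ σ ^ 2 * (((NF X k).filter (fun η => σ ⊆ η)).card : ℝ)
        = psi X k φ σ ^ 2 * ((Fintype.card V - (k+1) : ℕ) : ℝ)) := by
  have hNFc : ∀ η ∈ NF X k, η.card = k + 2 := fun η hη =>
    (Finset.mem_powersetCard.1 (Finset.mem_filter.1 hη).1).2
  -- middle sums
  have h23 : ∑ η ∈ NF X k, 2 * ∑ σ ∈ Sf X k η, psi X k φ σ ^ 2
      = ∑ σ ∈ (Finset.univ : Finset V).powersetCard (k+1),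
          2 * (psi X k φ σ ^ 2 * (((NF X k).filter (fun η => σ ⊆ η)).card : ℝ)) := by
    rw [← Finset.mul_sum, ← Finset.mul_sum,
      Finset.sum_congr rfl (fun η hη => sum_Sf_eq X k φ (hNFc η hη)), Finset.sum_comm]
    congr 1
    apply Finset.sum_congr rfl
    intro σ _
    rw [Finset.sum_ite, Finset.sum_const_zero, add_zero, Finset.sum_const, nsmul_eq_mul]
    ring
  have h34 : ∀ σ ∈ (Finset.univ : Finset V).powersetCard (k+1),
      2 * (psi X k φ σ ^ 2 * (((NF X k).filter (fun η => σ ⊆ η)).card : ℝ))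
        ≤ 2 * (psi X k φ σ ^ 2 * ((Fintype.card V - (k+1) : ℕ) : ℝ)) := by
    intro σ hσ
    have hcnt : ((NF X k).filter (fun η => σ ⊆ η)).card ≤ Fintype.card V - (k+1) := by
      have hsub : (NF X k).filter (fun η => σ ⊆ η)
          ⊆ ((Finset.univ : Finset V).powersetCard (k+2)).filter (fun η => σ ⊆ η) := by
        intro η hη
        exact Finset.mem_filter.2 ⟨(Finset.mem_filter.1 (Finset.mem_filter.1 hη).1).1,
          (Finset.mem_filter.1 hη).2⟩
      have := Finset.card_le_card hsub
      have hc2 : k + 2 = σ.card + 1 := by rw [(Finset.mem_powersetCard.1 hσ).2]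
      rw [hc2, card_supersets, (Finset.mem_powersetCard.1 hσ).2] at this
      exact this
    have : (((NF X k).filter (fun η => σ ⊆ η)).card : ℝ)
        ≤ ((Fintype.card V - (k+1) : ℕ) : ℝ) := by exact_mod_cast hcnt
    nlinarith [sq_nonneg (psi X k φ σ)]
  have h12 : ∀ η ∈ NF X k, Df X k φ η ^ 2 ≤ 2 * ∑ σ ∈ Sf X k η, psi X k φ σ ^ 2 :=
    fun η hη => Df_sq_le X hflag hvert k φ hη
  have hS12 : ∑ η ∈ NF X k, Df X k φ η ^ 2
      ≤ ∑ η ∈ NF X k, 2 * ∑ σ ∈ Sf X k η, psi X k φ σ ^ 2 := Finset.sum_le_sum h12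
  have hS34 : ∑ σ ∈ (Finset.univ : Finset V).powersetCard (k+1),
      2 * (psi X k φ σ ^ 2 * (((NF X k).filter (fun η => σ ⊆ η)).card : ℝ))
      ≤ ∑ σ ∈ (Finset.univ : Finset V).powersetCard (k+1),
        2 * (psi X k φ σ ^ 2 * ((Fintype.card V - (k+1) : ℕ) : ℝ)) := Finset.sum_le_sum h34
  have hS4 : ∑ σ ∈ (Finset.univ : Finset V).powersetCard (k+1),
      2 * (psi X k φ σ ^ 2 * ((Fintype.card V - (k+1) : ℕ) : ℝ))
      = 2 * ((Fintype.card V - (k+1) : ℕ) : ℝ)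
        * ∑ σ ∈ (Finset.univ : Finset V).powersetCard (k+1), psi X k φ σ ^ 2 := by
    rw [Finset.mul_sum]
    apply Finset.sum_congr rfl
    intro σ _; ring
  rw [h23] at hS12
  constructor
  · apply (Finset.sum_eq_sum_iff_of_le h12).1
    rw [h23]
    linarith [hS34, htot, hS4.symm]
  · intro σ hσ
    have := (Finset.sum_eq_sum_iff_of_le h34).1 (by linarith [hS12, htot, hS4]) σ hσ
    linarith [this]

end CliqueEqAux
namespace CliqueEqAux
open Matrix BigOperators Finset
variable {V : Type} [Fintype V] [DecidableEq V] [LinearOrder V] (X : SC V)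

lemma all_cofaces_missing (k : ℕ) (φ : X.face (k+1) → ℝ)
    (hB : ∀ σ ∈ (Finset.univ : Finset V).powersetCard (k+1),
      psi X k φ σ ^ 2 * (((NF X k).filter (fun η => σ ⊆ η)).card : ℝ)
        = psi X k φ σ ^ 2 * ((Fintype.card V - (k+1) : ℕ) : ℝ))
    {σ : Finset V} (hσc : σ.card = k + 1) (hψ : psi X k φ σ ≠ 0) :
    ∀ w, w ∉ σ → insert w σ ∉ X.faces := by
  intro w hw
  have hσP : σ ∈ (Finset.univ : Finset V).powersetCard (k+1) :=
    Finset.mem_powersetCard.2 ⟨Finset.subset_univ _, hσc⟩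
  have h1 := hB σ hσP
  have h2 : (((NF X k).filter (fun η => σ ⊆ η)).card : ℝ)
      = ((Fintype.card V - (k+1) : ℕ) : ℝ) :=
    mul_left_cancel₀ (pow_ne_zero 2 hψ) h1
  have h3 : ((NF X k).filter (fun η => σ ⊆ η)).card = Fintype.card V - (k+1) :=
    Nat.cast_injective h2
  have hsub : (NF X k).filter (fun η => σ ⊆ η)
      ⊆ ((Finset.univ : Finset V).powersetCard (k+2)).filter (fun η => σ ⊆ η) := by
    intro η hη
    exact Finset.mem_filter.2 ⟨(Finset.mem_filter.1 (Finset.mem_filter.1 hη).1).1,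
      (Finset.mem_filter.1 hη).2⟩
  have heq : (NF X k).filter (fun η => σ ⊆ η)
      = ((Finset.univ : Finset V).powersetCard (k+2)).filter (fun η => σ ⊆ η) := by
    apply Finset.eq_of_subset_of_card_le hsub
    have hc2 : k + 2 = σ.card + 1 := by omega
    rw [hc2, card_supersets, hσc, h3]
  have hmem : insert w σ ∈ ((Finset.univ : Finset V).powersetCard (k+2)).filter
      (fun η => σ ⊆ η) := by
    refine Finset.mem_filter.2 ⟨Finset.mem_powersetCard.2 ⟨Finset.subset_univ _, ?_⟩,
      Finset.subset_insert _ _⟩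
    rw [Finset.card_insert_of_notMem hw, hσc]
  rw [← heq] at hmem
  exact (Finset.mem_filter.1 (Finset.mem_filter.1 hmem).1).2

/-- The key structural lemma at the equality case. -/
lemma key (hflag : X.Flag) (hvert : ∀ v : V, {v} ∈ X.faces) (k : ℕ)
    (φ : X.face (k+1) → ℝ)
    (hA : ∀ η ∈ NF X k, Df X k φ η ^ 2 = 2 * ∑ σ ∈ Sf X k η, psi X k φ σ ^ 2)
    (hB : ∀ σ ∈ (Finset.univ : Finset V).powersetCard (k+1),
      psi X k φ σ ^ 2 * (((NF X k).filter (fun η => σ ⊆ η)).card : ℝ)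
        = psi X k φ σ ^ 2 * ((Fintype.card V - (k+1) : ℕ) : ℝ))
    {σ : Finset V} (hσf : σ ∈ X.faces) (hσc : σ.card = k + 1)
    (hψ : psi X k φ σ ≠ 0) {w : V} (hw : w ∉ σ) :
    ∃ u ∈ σ, ({u, w} : Finset V) ∉ X.faces
      ∧ (∀ x ∈ σ, x ≠ u → ({x, w} : Finset V) ∈ X.faces)
      ∧ insert w (σ.erase u) ∈ X.faces
      ∧ (insert w (σ.erase u)).card = k + 1
      ∧ psi X k φ (insert w (σ.erase u))
          = eps (insert w σ) u * eps (insert w σ) w * psi X k φ σ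
      ∧ psi X k φ (insert w (σ.erase u)) ≠ 0 := by
  have hηc : (insert w σ).card = k + 2 := by
    rw [Finset.card_insert_of_notMem hw, hσc]
  have hηnf : insert w σ ∉ X.faces := all_cofaces_missing X k φ hB hσc hψ w hw
  have hηNF : insert w σ ∈ NF X k :=
    Finset.mem_filter.2 ⟨Finset.mem_powersetCard.2 ⟨Finset.subset_univ _, hηc⟩, hηnf⟩
  obtain ⟨p, hp, q, hq, hpq, hmiss⟩ := missing_pair X hflag hvert hηnf
  -- one of p, q equals w
  have hnot : ¬ (p ∈ σ ∧ q ∈ σ) := by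
    rintro ⟨hps, hqs⟩
    exact hmiss (X.down_closed σ hσf _ (by
      rw [Finset.insert_subset_iff, Finset.singleton_subset_iff]; exact ⟨hps, hqs⟩))
  obtain ⟨u, hu, humiss⟩ : ∃ u ∈ σ, ({u, w} : Finset V) ∉ X.faces := by
    rcases Finset.mem_insert.1 hp with rfl | hps
    · rcases Finset.mem_insert.1 hq with rfl | hqs
      · exact absurd rfl hpq
      · exact ⟨q, hqs, by rwa [Finset.pair_comm]⟩
    · rcases Finset.mem_insert.1 hq with rfl | hqs
      · exact ⟨p, hps, hmiss⟩
      · exact absurd ⟨hps, hqs⟩ hnot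
  have huw : u ≠ w := fun h => hw (h ▸ hu)
  have huη : u ∈ insert w σ := Finset.mem_insert_of_mem hu
  have hwη : w ∈ insert w σ := Finset.mem_insert_self w σ
  have hσerase : σ = (insert w σ).erase w := (Finset.erase_insert hw).symm
  have hσ'erase : insert w (σ.erase u) = (insert w σ).erase u :=
    (Finset.erase_insert_of_ne huw.symm).symm
  have hSub : Sf X k (insert w σ) ⊆ {(insert w σ).erase u, (insert w σ).erase w} :=
    Sf_subset_pair X hηc huη hwη humiss
  have hσSf : σ ∈ Sf X k (insert w σ) :=
    Finset.mem_filter.2 ⟨Finset.mem_powersetCard.2 ⟨Finset.subset_insert _ _, hσc⟩, hσf⟩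
  have hAη := hA _ hηNF
  have hsgnσ : SC.sgn (insert w σ) σ = eps (insert w σ) w := by
    have := sgn_erase hwη
    rwa [← hσerase] at this
  by_cases hu' : (insert w σ).erase u ∈ Sf X k (insert w σ)
  · -- Sf = {erase u, σ}
    have hne : (insert w σ).erase u ≠ σ := by
      intro h
      rw [← h] at hu
      exact (Finset.mem_erase.1 hu).1 rfl
    have hSfEq : Sf X k (insert w σ) = {(insert w σ).erase u, σ} := by
      apply Finset.Subset.antisymm
      · intro τ hτ
        rcases Finset.mem_insert.1 (hSub hτ) with h | h
        · rw [h]; exact Finset.mem_insert_self _ _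
        · rw [Finset.mem_singleton.1 h, ← hσerase]
          exact Finset.mem_insert.2 (Or.inr (Finset.mem_singleton_self _))
      · intro τ hτ
        rcases Finset.mem_insert.1 hτ with rfl | h
        · exact hu'
        · rw [Finset.mem_singleton.1 h]; exact hσSf
    have hsgnσ' : SC.sgn (insert w σ) ((insert w σ).erase u) = eps (insert w σ) u :=
      sgn_erase huη
    rw [Df_eq_sum_Sf, hSfEq, Finset.sum_pair hne, Finset.sum_pair hne,
      hsgnσ, hsgnσ'] at hAη
    -- let a, b
    set a := eps (insert w σ) u * psi X k φ ((insert w σ).erase u) with ha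
    set b := eps (insert w σ) w * psi X k φ σ with hb
    have hepsu := eps_mul_self (insert w σ) u
    have hepsw := eps_mul_self (insert w σ) w
    have hab : a = b := by
      have h1 : a ^ 2 = psi X k φ ((insert w σ).erase u) ^ 2 := by
        rw [ha]; ring_nf; nlinarith [hepsu]
      have h2 : b ^ 2 = psi X k φ σ ^ 2 := by
        rw [hb]; ring_nf; nlinarith [hepsw]
      have h3 : (a - b) ^ 2 = 0 := by nlinarith [hAη, h1, h2]
      have := pow_eq_zero_iff (n := 2) (by norm_num) |>.1 h3
      linarith [this]
    have hψ' : psi X k φ ((insert w σ).erase u)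
        = eps (insert w σ) u * eps (insert w σ) w * psi X k φ σ := by
      have : eps (insert w σ) u * a = eps (insert w σ) u * b := by rw [hab]
      rw [ha, hb] at this
      calc psi X k φ ((insert w σ).erase u)
          = (eps (insert w σ) u * eps (insert w σ) u) * psi X k φ ((insert w σ).erase u) := by
            rw [hepsu]; ring
        _ = eps (insert w σ) u * eps (insert w σ) w * psi X k φ σ := by
            rw [mul_assoc, this]; ring
    obtain ⟨hσ's, hσ'f⟩ := Finset.mem_filter.1 hu'
    refine ⟨u, hu, humiss, ?_, ?_, ?_, ?_, ?_⟩
    · intro x hx hxu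
      apply X.down_closed _ hσ'f
      rw [Finset.insert_subset_iff, Finset.singleton_subset_iff]
      exact ⟨Finset.mem_erase.2 ⟨hxu, Finset.mem_insert_of_mem hx⟩,
        Finset.mem_erase.2 ⟨huw.symm, hwη⟩⟩
    · rw [hσ'erase]; exact hσ'f
    · rw [hσ'erase]; exact (Finset.mem_powersetCard.1 hσ's).2
    · rw [hσ'erase]; exact hψ'
    · rw [hσ'erase, hψ']
      exact mul_ne_zero (mul_ne_zero (eps_ne_zero _ _) (eps_ne_zero _ _)) hψ
  · -- Sf = {σ}, contradiction
    exfalso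
    have hSfEq : Sf X k (insert w σ) = {σ} := by
      apply Finset.Subset.antisymm
      · intro τ hτ
        rcases Finset.mem_insert.1 (hSub hτ) with h | h
        · exact absurd (h ▸ hτ) hu'
        · rw [Finset.mem_singleton.1 h, ← hσerase]; exact Finset.mem_singleton_self _
      · intro τ hτ
        rw [Finset.mem_singleton.1 hτ]; exact hσSf
    rw [Df_eq_sum_Sf, hSfEq, Finset.sum_singleton, Finset.sum_singleton, hsgnσ] at hAη
    have := eps_mul_self (insert w σ) w
    have : psi X k φ σ ^ 2 = 0 := by nlinarith [hAη, this]
    exact hψ (pow_eq_zero_iff (n := 2) (by norm_num) |>.1 this)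

end CliqueEqAux
namespace CliqueEqAux
open Matrix BigOperators Finset
variable {V : Type} [Fintype V] [DecidableEq V] [LinearOrder V] (X : SC V)

/-- Two distinct outside vertices cannot have the same non-neighbor. -/
lemma hexagon (hflag : X.Flag) (hvert : ∀ v : V, {v} ∈ X.faces) (k : ℕ)
    (φ : X.face (k+1) → ℝ)
    (hA : ∀ η ∈ NF X k, Df X k φ η ^ 2 = 2 * ∑ σ ∈ Sf X k η, psi X k φ σ ^ 2)
    (hB : ∀ σ ∈ (Finset.univ : Finset V).powersetCard (k+1),
      psi X k φ σ ^ 2 * (((NF X k).filter (fun η => σ ⊆ η)).card : ℝ)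
        = psi X k φ σ ^ 2 * ((Fintype.card V - (k+1) : ℕ) : ℝ))
    {σ₀ : Finset V} (hσf : σ₀ ∈ X.faces) (hσc : σ₀.card = k + 1)
    (hψ : psi X k φ σ₀ ≠ 0) {w w' u : V} (hw : w ∉ σ₀) (hw' : w' ∉ σ₀)
    (hww' : w ≠ w') (hu : u ∈ σ₀)
    (hmw : ({u, w} : Finset V) ∉ X.faces)
    (hmw' : ({u, w'} : Finset V) ∉ X.faces)
    (hew : ∀ x ∈ σ₀, x ≠ u → ({x, w} : Finset V) ∈ X.faces)
    (hew' : ∀ x ∈ σ₀, x ≠ u → ({x, w'} : Finset V) ∈ X.faces) : False := by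
  have huw : u ≠ w := fun h => hw (h ▸ hu)
  have huw' : u ≠ w' := fun h => hw' (h ▸ hu)
  -- step 1 : apply key to (σ₀, w)
  obtain ⟨u₁, hu₁, hmiss₁, hall₁, hf₁, hc₁, hrel₁, hne₁⟩ :=
    key X hflag hvert k φ hA hB hσf hσc hψ hw
  have hu₁u : u₁ = u := by
    by_contra hne
    exact hmiss₁ (hew u₁ hu₁ hne)
  rw [hu₁u] at hmiss₁ hall₁ hf₁ hc₁ hrel₁ hne₁
  -- step 2 : apply key to (σ₀, w')
  obtain ⟨u₂, hu₂, hmiss₂, hall₂, hf₂, hc₂, hrel₂, hne₂⟩ :=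
    key X hflag hvert k φ hA hB hσf hσc hψ hw'
  have hu₂u : u₂ = u := by
    by_contra hne
    exact hmiss₂ (hew' u₂ hu₂ hne)
  rw [hu₂u] at hmiss₂ hall₂ hf₂ hc₂ hrel₂ hne₂
  -- step 3 : apply key to (σ₁, w') where σ₁ = insert w (σ₀.erase u)
  have hw'σ₁ : w' ∉ insert w (σ₀.erase u) := by
    intro h
    rcases Finset.mem_insert.1 h with h' | h'
    · exact hww' h'.symm
    · exact hw' (Finset.mem_of_mem_erase h')
  obtain ⟨u₃, hu₃, hmiss₃, hall₃, hf₃, hc₃, hrel₃, hne₃⟩ :=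
    key X hflag hvert k φ hA hB hf₁ hc₁ hne₁ hw'σ₁
  have hu₃w : u₃ = w := by
    by_contra hne
    rcases Finset.mem_insert.1 hu₃ with h' | h'
    · exact hne h'
    · exact hmiss₃ (hew' u₃ (Finset.mem_of_mem_erase h') (Finset.ne_of_mem_erase h'))
  rw [hu₃w] at hrel₃
  -- rewrite the third relation
  have herase : (insert w (σ₀.erase u)).erase w = σ₀.erase u :=
    Finset.erase_insert (fun h => hw (Finset.mem_of_mem_erase h))
  rw [herase] at hrel₃
  -- now hrel₃ : psi (insert w' (σ₀.erase u)) = eps η₃ w * eps η₃ w' * psi σ₁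
  rw [hrel₁] at hrel₃
  rw [hrel₂] at hrel₃
  -- identify the ambient sets
  set ζ := insert w' (insert w σ₀) with hζ
  have hwζ : w ∈ ζ := Finset.mem_insert_of_mem (Finset.mem_insert_self _ _)
  have hw'ζ : w' ∈ ζ := Finset.mem_insert_self _ _
  have huζ : u ∈ ζ := Finset.mem_insert_of_mem (Finset.mem_insert_of_mem hu)
  have hη₁ : insert w σ₀ = ζ.erase w' := by
    rw [hζ, Finset.erase_insert]
    intro h
    rcases Finset.mem_insert.1 h with h' | h'
    · exact hww' h'.symm
    · exact hw' h'
  have hη₂ : insert w' σ₀ = ζ.erase w := by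
    rw [hζ, Finset.insert_comm, Finset.erase_insert]
    intro h
    rcases Finset.mem_insert.1 h with h' | h'
    · exact hww' h'
    · exact hw h'
  have hη₃ : insert w' (insert w (σ₀.erase u)) = ζ.erase u := by
    rw [hζ, Finset.erase_insert_of_ne huw'.symm, Finset.erase_insert_of_ne huw.symm]
  rw [hη₁, hη₂, hη₃] at hrel₃
  -- expand the eps values on erased sets
  rw [eps_erase hw'ζ u, eps_erase hw'ζ w, eps_erase hwζ u, eps_erase hwζ w',
    eps_erase huζ w, eps_erase huζ w'] at hrel₃
  have ha := eps_mul_self ζ u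
  have hb := eps_mul_self ζ w
  have hc := eps_mul_self ζ w'
  have hane : eps ζ u ≠ 0 := eps_ne_zero ζ u
  have hcne : eps ζ w' ≠ 0 := eps_ne_zero ζ w'
  rcases lt_or_gt_of_ne huw with h1 | h1 <;>
  rcases lt_or_gt_of_ne huw' with h2 | h2 <;>
  rcases lt_or_gt_of_ne hww' with h3 | h3 <;>
  rw [if_pos h1, if_neg (lt_asymm h1), if_pos h2, if_neg (lt_asymm h2),
    if_pos h3, if_neg (lt_asymm h3)] at hrel₃ <;>
  [skip; skip; skip; skip; skip; skip; skip; skip] <;>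
  · have E : eps ζ u * eps ζ w' * psi X k φ σ₀
        + eps ζ u * eps ζ w * eps ζ w * eps ζ w' * psi X k φ σ₀ = 0 := by
      first
      | linear_combination hrel₃
      | linear_combination -hrel₃
    have E2 : 2 * (eps ζ u * eps ζ w' * psi X k φ σ₀) = 0 := by
      linear_combination E - eps ζ u * eps ζ w' * psi X k φ σ₀ * hb
    have E3 : eps ζ u * eps ζ w' * psi X k φ σ₀ = 0 := by linarith
    rcases mul_eq_zero.1 E3 with h | h
    · rcases mul_eq_zero.1 h with h' | h'
      · exact hane h'
      · exact hcne h'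
    · exact hψ h

end CliqueEqAux
namespace CliqueEqAux
open Matrix BigOperators Finset
variable {V : Type} [Fintype V] [DecidableEq V] [LinearOrder V] (X : SC V)

section Structure

variable (hflag : X.Flag) (hvert : ∀ v : V, {v} ∈ X.faces) (k : ℕ)
  (φ : X.face (k+1) → ℝ)
  (hA : ∀ η ∈ NF X k, Df X k φ η ^ 2 = 2 * ∑ σ ∈ Sf X k η, psi X k φ σ ^ 2)
  (hB : ∀ σ ∈ (Finset.univ : Finset V).powersetCard (k+1),
    psi X k φ σ ^ 2 * (((NF X k).filter (fun η => σ ⊆ η)).card : ℝ)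
      = psi X k φ σ ^ 2 * ((Fintype.card V - (k+1) : ℕ) : ℝ))
  {σ₀ : Finset V} (hσf : σ₀ ∈ X.faces) (hσc : σ₀.card = k + 1)
  (hψ : psi X k φ σ₀ ≠ 0) (Nb : V → V)
  (hNb1 : ∀ w, w ∉ σ₀ → Nb w ∈ σ₀)
  (hNb2 : ∀ w, w ∉ σ₀ → ({Nb w, w} : Finset V) ∉ X.faces)
  (hNb3 : ∀ w, w ∉ σ₀ → ∀ x ∈ σ₀, x ≠ Nb w → ({x, w} : Finset V) ∈ X.faces)

include hflag hvert hA hB hσf hσc hψ hNb1 hNb2 hNb3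

lemma nb_inj : ∀ w, w ∉ σ₀ → ∀ w', w' ∉ σ₀ → w ≠ w' → Nb w ≠ Nb w' := by
  intro w hw w' hw' hww' heq
  exact hexagon X hflag hvert k φ hA hB hσf hσc hψ hw hw' hww' (hNb1 w hw)
    (hNb2 w hw) (heq ▸ hNb2 w' hw') (fun x hx hxu => hNb3 w hw x hx hxu)
    (fun x hx hxu => hNb3 w' hw' x hx (fun h => hxu (h.trans heq.symm)))

lemma edge_out_out : ∀ w, w ∉ σ₀ → ∀ w', w' ∉ σ₀ → w ≠ w' →
    ({w, w'} : Finset V) ∈ X.faces := by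
  intro w hw w' hw' hww'
  have hNbne : Nb w ≠ Nb w' :=
    nb_inj X hflag hvert k φ hA hB hσf hσc hψ Nb hNb1 hNb2 hNb3 w hw w' hw' hww'
  obtain ⟨u₁, hu₁, hmiss₁, hall₁, hf₁, hc₁, hrel₁, hne₁⟩ :=
    key X hflag hvert k φ hA hB hσf hσc hψ hw
  have hu₁Nb : u₁ = Nb w := by
    by_contra hne
    exact hmiss₁ (hNb3 w hw u₁ hu₁ hne)
  rw [hu₁Nb] at hf₁ hc₁ hne₁
  have hw'σ₁ : w' ∉ insert w (σ₀.erase (Nb w)) := by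
    intro h
    rcases Finset.mem_insert.1 h with h' | h'
    · exact hww' h'.symm
    · exact hw' (Finset.mem_of_mem_erase h')
  obtain ⟨u₃, hu₃, hmiss₃, hall₃, hf₃, hc₃, hrel₃, hne₃⟩ :=
    key X hflag hvert k φ hA hB hf₁ hc₁ hne₁ hw'σ₁
  have hu₃Nb : u₃ = Nb w' := by
    by_contra hne
    apply hNb2 w' hw'
    apply hall₃ (Nb w')
    · exact Finset.mem_insert_of_mem (Finset.mem_erase.2 ⟨hNbne.symm, hNb1 w' hw'⟩)
    · exact fun h => hne h.symm
  apply hall₃ w (Finset.mem_insert_self _ _)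
  rw [hu₃Nb]
  intro h
  exact hw (h ▸ hNb1 w' hw')

lemma charX : ∀ σ : Finset V,
    σ ∈ X.faces ↔ ∀ w, w ∉ σ₀ → ¬(w ∈ σ ∧ Nb w ∈ σ) := by
  intro σ
  constructor
  · rintro hσ w hw ⟨hwσ, hNbσ⟩
    apply hNb2 w hw
    apply X.down_closed σ hσ
    rw [Finset.insert_subset_iff, Finset.singleton_subset_iff]
    exact ⟨hNbσ, hwσ⟩
  · intro hcond
    apply hflag
    intro x hx y hy
    by_cases hxy : x = y
    · subst hxy; rw [pair_self]; exact hvert x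
    · by_cases hxσ₀ : x ∈ σ₀
      · by_cases hyσ₀ : y ∈ σ₀
        · exact X.down_closed σ₀ hσf _ (by
            rw [Finset.insert_subset_iff, Finset.singleton_subset_iff]
            exact ⟨hxσ₀, hyσ₀⟩)
        · -- x ∈ σ₀, y ∉ σ₀
          apply hNb3 y hyσ₀ x hxσ₀
          intro h
          exact hcond y hyσ₀ ⟨hy, h ▸ hx⟩
      · by_cases hyσ₀ : y ∈ σ₀
        · rw [Finset.pair_comm]
          apply hNb3 x hxσ₀ y hyσ₀
          intro h
          exact hcond x hxσ₀ ⟨hx, h ▸ hy⟩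
        · exact edge_out_out X hflag hvert k φ hA hB hσf hσc hψ Nb hNb1 hNb2 hNb3
            x hxσ₀ y hyσ₀ hxy

lemma card_le_of_face : ∀ σ ∈ X.faces, σ.card ≤ k + 1 := by
  intro σ hσ
  have hchar := (charX X hflag hvert k φ hA hB hσf hσc hψ Nb hNb1 hNb2 hNb3 σ).1 hσ
  have hmap : ∀ x ∈ σ, (if x ∈ σ₀ then x else Nb x) ∈ σ₀ := by
    intro x hx
    by_cases h : x ∈ σ₀
    · rwa [if_pos h]
    · rw [if_neg h]; exact hNb1 x h
  have hcount := Finset.card_eq_sum_card_fiberwise hmap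
  have hfib : ∀ b ∈ σ₀, (σ.filter (fun x => (if x ∈ σ₀ then x else Nb x) = b)).card ≤ 1 := by
    intro b hb
    rw [Finset.card_le_one]
    intro x hx y hy
    obtain ⟨hxσ, hxb⟩ := Finset.mem_filter.1 hx
    obtain ⟨hyσ, hyb⟩ := Finset.mem_filter.1 hy
    by_cases hxσ₀ : x ∈ σ₀ <;> by_cases hyσ₀ : y ∈ σ₀
    · rw [if_pos hxσ₀] at hxb; rw [if_pos hyσ₀] at hyb; rw [hxb, hyb]
    · -- x = b ∈ σ₀, Nb y = b, y ∉ σ₀ : contradiction with hchar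
      exfalso
      rw [if_pos hxσ₀] at hxb; rw [if_neg hyσ₀] at hyb
      exact hchar y hyσ₀ ⟨hyσ, by rw [hyb, ← hxb]; exact hxσ⟩
    · exfalso
      rw [if_neg hxσ₀] at hxb; rw [if_pos hyσ₀] at hyb
      exact hchar x hxσ₀ ⟨hxσ, by rw [hxb, ← hyb]; exact hyσ⟩
    · rw [if_neg hxσ₀] at hxb; rw [if_neg hyσ₀] at hyb
      by_contra hne
      exact nb_inj X hflag hvert k φ hA hB hσf hσc hψ Nb hNb1 hNb2 hNb3
        x hxσ₀ y hyσ₀ hne (hxb.trans hyb.symm)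
  calc σ.card = ∑ b ∈ σ₀, (σ.filter (fun x => (if x ∈ σ₀ then x else Nb x) = b)).card := hcount
    _ ≤ ∑ b ∈ σ₀, 1 := Finset.sum_le_sum hfib
    _ = σ₀.card := by rw [Finset.sum_const, smul_eq_mul, mul_one]
    _ = k + 1 := hσc

end Structure
end CliqueEqAux
namespace CliqueEqAux
open Matrix BigOperators Finset

lemma mem_image_equiv' {α β : Type} [DecidableEq α] [DecidableEq β] (e : α ≃ β)
    (σ : Finset α) (z : β) : z ∈ σ.image e ↔ e.symm z ∈ σ := by
  simp only [Finset.mem_image]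
  constructor
  · rintro ⟨a, ha, rfl⟩; rwa [Equiv.symm_apply_apply]
  · intro h; exact ⟨e.symm z, h, by simp⟩

lemma card_filter_le_one_iff {β : Type} [DecidableEq β] (s : Finset β) (p : β → Prop)
    [DecidablePred p] {a b : β} (hab : a ≠ b)
    (hsub : ∀ x, p x ↔ (x = a ∨ x = b)) :
    (s.filter p).card ≤ 1 ↔ ¬(a ∈ s ∧ b ∈ s) := by
  constructor
  · rintro h ⟨ha, hb⟩
    have : ({a, b} : Finset β) ⊆ s.filter p := by
      intro x hx
      rcases Finset.mem_insert.1 hx with rfl | hx'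
      · exact Finset.mem_filter.2 ⟨ha, (hsub x).2 (Or.inl rfl)⟩
      · rw [Finset.mem_singleton.1 hx']
        exact Finset.mem_filter.2 ⟨hb, (hsub b).2 (Or.inr rfl)⟩
    have h2 := Finset.card_le_card this
    rw [Finset.card_insert_of_notMem (fun h' => hab (Finset.mem_singleton.1 h')),
      Finset.card_singleton] at h2
    omega
  · intro h
    rw [Finset.card_le_one]
    intro x hx y hy
    obtain ⟨hxs, hxp⟩ := Finset.mem_filter.1 hx
    obtain ⟨hys, hyp⟩ := Finset.mem_filter.1 hy
    rcases (hsub x).1 hxp with rfl | rfl <;> rcases (hsub y).1 hyp with rfl | rfl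
    · rfl
    · exact absurd ⟨hxs, hys⟩ h
    · exact absurd ⟨hys, hxs⟩ h
    · rfl

end CliqueEqAux

set_option maxHeartbeats 1000000 in
open CliqueEqAux in
/-- If `X` is a clique complex on `n` vertices with
`μ_k(X) = 2(k+1) - n` for some `k` (`m = k + 1`), then `X` is isomorphic to
`(Δ_1^{(0)})^{∗(n-k-1)} ∗ Δ_{2(k+1)-n-1}`; in particular `dim X = k`. -/
theorem clique_equality_case {V : Type} [Fintype V] [DecidableEq V] [LinearOrder V]
    (X : SC V) (hflag : X.Flag) (hvert : ∀ v : V, {v} ∈ X.faces) (m : ℕ)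
    (hμ : IsLeast (X.eigenvals m) (2 * (m : ℝ) - (Fintype.card V : ℝ))) :
    (∃ e : V ≃ ((Fin (Fintype.card V - m) × Fin 2) ⊕ Fin (2 * m - Fintype.card V)),
        ∀ σ : Finset V, σ ∈ X.faces ↔
          σ.image e ∈ (Zcx 1 (Fintype.card V - m) (2 * m - Fintype.card V)).faces)
      ∧ X.faces.sup Finset.card = m := by
  classical
  obtain ⟨hev, -⟩ := hμ
  obtain ⟨φ, hφvec⟩ := hev.exists_hasEigenvector
  have hφne : φ ≠ 0 := hφvec.right
  have hLφ : (X.Lap m).mulVec φ = (2 * (m : ℝ) - (Fintype.card V : ℝ)) • φ := by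
    have := hφvec.apply_eq_smul
    rwa [Matrix.toLin'_apply] at this
  rcases m with _ | k
  · -- m = 0 : forces the vertex set to be empty
    have hquad : φ ⬝ᵥ (X.Lap 0).mulVec φ = ((X.CB 0).mulVec φ) ⬝ᵥ ((X.CB 0).mulVec φ) := by
      show φ ⬝ᵥ ((X.CB 0)ᵀ * X.CB 0).mulVec φ = _
      rw [← Matrix.mulVec_mulVec, Matrix.dotProduct_mulVec, Matrix.vecMul_transpose]
    have hpos : 0 ≤ φ ⬝ᵥ (X.Lap 0).mulVec φ := by
      rw [hquad]
      exact Finset.sum_nonneg fun i _ => mul_self_nonneg _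
    have hS : 0 < φ ⬝ᵥ φ := by
      obtain ⟨i, hi⟩ := Function.ne_iff.1 hφne
      exact Finset.sum_pos' (fun j _ => mul_self_nonneg _)
        ⟨i, Finset.mem_univ i, mul_self_pos.2 hi⟩
    rw [hLφ, dotProduct_smul, smul_eq_mul] at hpos
    have hn0 : Fintype.card V = 0 := by
      have h1 : (0:ℝ) ≤ 2 * ((0:ℕ):ℝ) - Fintype.card V :=
        le_of_not_gt fun hlt => absurd hpos (not_le.2 (mul_neg_of_neg_of_pos hlt hS))
      have h2 : (Fintype.card V : ℝ) ≤ 0 := by push_cast at h1; linarith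
      exact_mod_cast le_antisymm (by exact_mod_cast h2) (Nat.zero_le _)
    haveI hemp : IsEmpty V := Fintype.card_eq_zero_iff.1 hn0
    haveI h1 : IsEmpty (Fin (Fintype.card V - 0)) := ⟨fun i => absurd i.isLt (by omega)⟩
    haveI h2 : IsEmpty (Fin (2 * 0 - Fintype.card V)) := ⟨fun i => absurd i.isLt (by omega)⟩
    refine ⟨⟨Equiv.equivOfIsEmpty _ _, ?_⟩, ?_⟩
    · intro σ
      have hσ : σ = ∅ := Finset.eq_empty_of_forall_notMem fun x _ => (hemp.false x)
      subst hσ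
      simp only [Finset.image_empty]
      exact ⟨fun _ => (Zcx _ _ _).empty_mem, fun _ => X.empty_mem⟩
    · apply le_antisymm
      · apply Finset.sup_le
        intro σ hσ
        have hσe : σ = ∅ := Finset.eq_empty_of_forall_notMem fun x _ => (hemp.false x)
        subst hσe
        simp
      · exact Nat.zero_le _
  · -- main case m = k + 1
    obtain ⟨sh₀, hsh₀⟩ := Function.ne_iff.1 hφne
    obtain ⟨hσ₀f, hσ₀c⟩ := sh₀.2
    have hψ₀ : psi X k φ sh₀.1 ≠ 0 := by rw [psi_spec]; exact hsh₀
    have hkn : k + 1 ≤ Fintype.card V := by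
      rw [← hσ₀c, ← Finset.card_univ]
      exact Finset.card_le_card (Finset.subset_univ _)
    have hdotself : φ ⬝ᵥ φ = ∑ sh : X.face (k+1), φ sh ^ 2 := by
      unfold dotProduct
      exact Finset.sum_congr rfl fun sh _ => (sq _).symm
    have hdot : φ ⬝ᵥ (X.Lap (k+1)).mulVec φ
        = (2 * (((k:ℕ)+1 : ℕ) : ℝ) - (Fintype.card V : ℝ))
          * ∑ sh : X.face (k+1), φ sh ^ 2 := by
      rw [hLφ, dotProduct_smul, smul_eq_mul, hdotself]
    have hgrand := grand_identity X k φ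
    have hSeq := sum_psi_sq X k φ
    have htot : ∑ η ∈ NF X k, Df X k φ η ^ 2
        = 2 * ((Fintype.card V - (k+1) : ℕ) : ℝ)
          * ∑ σ ∈ (Finset.univ : Finset V).powersetCard (k+1), psi X k φ σ ^ 2 := by
      rw [hSeq]
      have hcast : ((Fintype.card V - (k+1) : ℕ) : ℝ) = (Fintype.card V : ℝ) - ((k:ℝ)+1) := by
        rw [Nat.cast_sub hkn]; push_cast; ring
      rw [hcast]
      push_cast at hdot
      linear_combination hgrand - hdot
    obtain ⟨hA, hB⟩ := chain_ineq X hflag hvert k φ htot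
    obtain ⟨v₀, hv₀⟩ : ∃ v₀, v₀ ∈ sh₀.1 := Finset.card_pos.1 (by omega)
    have hex : ∀ w : V, ∃ u : V, w ∉ sh₀.1 →
        (u ∈ sh₀.1 ∧ ({u, w} : Finset V) ∉ X.faces
          ∧ ∀ x ∈ sh₀.1, x ≠ u → ({x, w} : Finset V) ∈ X.faces) := by
      intro w
      by_cases h : w ∈ sh₀.1
      · exact ⟨v₀, fun h' => absurd h h'⟩
      · obtain ⟨u, hu, h2, h3, -, -, -, -⟩ := key X hflag hvert k φ hA hB hσ₀f hσ₀c hψ₀ h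
        exact ⟨u, fun _ => ⟨hu, h2, h3⟩⟩
    choose Nb hNb using hex
    have hNb1 : ∀ w, w ∉ sh₀.1 → Nb w ∈ sh₀.1 := fun w hw => (hNb w hw).1
    have hNb2 : ∀ w, w ∉ sh₀.1 → ({Nb w, w} : Finset V) ∉ X.faces := fun w hw => (hNb w hw).2.1
    have hNb3 : ∀ w, w ∉ sh₀.1 → ∀ x ∈ sh₀.1, x ≠ Nb w → ({x, w} : Finset V) ∈ X.faces :=
      fun w hw => (hNb w hw).2.2
    have hchar := charX X hflag hvert k φ hA hB hσ₀f hσ₀c hψ₀ Nb hNb1 hNb2 hNb3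
    have hcardle := card_le_of_face X hflag hvert k φ hA hB hσ₀f hσ₀c hψ₀ Nb hNb1 hNb2 hNb3
    have hinj := nb_inj X hflag hvert k φ hA hB hσ₀f hσ₀c hψ₀ Nb hNb1 hNb2 hNb3
    set W : Finset V := Finset.univ \ sh₀.1 with hW
    have hWmem : ∀ w : V, w ∈ W ↔ w ∉ sh₀.1 := fun w => by
      rw [hW, Finset.mem_sdiff]
      exact ⟨fun h => h.2, fun h => ⟨Finset.mem_univ w, h⟩⟩
    have hWcard : W.card = Fintype.card V - (k+1) := by
      rw [hW, Finset.card_sdiff_of_subset (Finset.subset_univ _), Finset.card_univ, hσ₀c]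
    have hinjOn : Set.InjOn Nb ↑W := by
      intro x hx y hy hxy
      by_contra hne
      exact hinj x ((hWmem x).1 (Finset.mem_coe.1 hx)) y ((hWmem y).1 (Finset.mem_coe.1 hy))
        hne hxy
    set A : Finset V := W.image Nb with hAdef
    have hAsub : A ⊆ sh₀.1 := by
      intro a ha
      obtain ⟨w, hw, rfl⟩ := Finset.mem_image.1 ha
      exact hNb1 w ((hWmem w).1 hw)
    have hAcard : A.card = Fintype.card V - (k+1) := by
      rw [hAdef, Finset.card_image_of_injOn hinjOn, hWcard]
    have hnle : Fintype.card V ≤ 2*(k+1) := by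
      have := Finset.card_le_card hAsub
      rw [hAcard, hσ₀c] at this
      omega
    set R : Finset V := sh₀.1 \ A with hRdef
    have hRcard : R.card = 2 * (k+1) - Fintype.card V := by
      rw [hRdef, Finset.card_sdiff_of_subset hAsub, hAcard, hσ₀c]
      omega
    let eqW : {x // x ∈ W} ≃ Fin (Fintype.card V - (k+1)) := W.equivFin.trans (finCongr hWcard)
    let eqR : {x // x ∈ R} ≃ Fin (2 * (k+1) - Fintype.card V) :=
      R.equivFin.trans (finCongr hRcard)
    let g : (Fin (Fintype.card V - (k+1)) × Fin 2) ⊕ Fin (2 * (k+1) - Fintype.card V) → V :=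
      fun z => Sum.elim
        (fun p => if p.2 = 0 then (eqW.symm p.1 : V) else Nb (eqW.symm p.1))
        (fun j => (eqR.symm j : V)) z
    have hg0 : ∀ i, g (Sum.inl (i, 0)) = (eqW.symm i : V) := fun i => by simp [g]
    have hg1 : ∀ i, g (Sum.inl (i, 1)) = Nb (eqW.symm i) := fun i => by
      have h10 : ((1 : Fin 2) = 0) = False := by simp
      simp [g, h10]
    have hgR : ∀ j, g (Sum.inr j) = (eqR.symm j : V) := fun j => rfl
    have hfin2 : ∀ b : Fin 2, b = 0 ∨ b = 1 := by decide
    have hWnotσ₀ : ∀ i, (eqW.symm i : V) ∉ sh₀.1 := fun i => (hWmem _).1 (eqW.symm i).2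
    have hRmem : ∀ j, (eqR.symm j : V) ∈ sh₀.1 ∧ (eqR.symm j : V) ∉ A := fun j =>
      Finset.mem_sdiff.1 ((hRdef ▸ (eqR.symm j).2))
    have hNbA : ∀ i, Nb (eqW.symm i : V) ∈ A := fun i =>
      hAdef ▸ Finset.mem_image_of_mem Nb (eqW.symm i).2
    have hginj : Function.Injective g := by
      rintro (⟨i, b⟩ | j) (⟨i', b'⟩ | j') hzz
      · rcases hfin2 b with rfl | rfl <;> rcases hfin2 b' with rfl | rfl
        · rw [hg0, hg0] at hzz
          have := eqW.symm.injective (Subtype.coe_injective hzz)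
          rw [this]
        · rw [hg0, hg1] at hzz
          exact absurd (hzz ▸ hNb1 _ (hWnotσ₀ i')) (hWnotσ₀ i)
        · rw [hg1, hg0] at hzz
          exact absurd (hzz ▸ hNb1 _ (hWnotσ₀ i)) (hWnotσ₀ i')
        · rw [hg1, hg1] at hzz
          have := hinjOn (eqW.symm i).2 (eqW.symm i').2 hzz
          have := eqW.symm.injective (Subtype.coe_injective this)
          rw [this]
      · rcases hfin2 b with rfl | rfl
        · rw [hg0, hgR] at hzz
          exact absurd (hzz ▸ (hRmem j').1) (hWnotσ₀ i)
        · rw [hg1, hgR] at hzz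
          exact absurd (hzz ▸ hNbA i) (hRmem j').2
      · rcases hfin2 b' with rfl | rfl
        · rw [hg0, hgR] at hzz
          exact absurd (hzz.symm ▸ (hRmem j).1) (hWnotσ₀ i')
        · rw [hg1, hgR] at hzz
          exact absurd (hzz.symm ▸ hNbA i') (hRmem j).2
      · rw [hgR, hgR] at hzz
        have := eqR.symm.injective (Subtype.coe_injective hzz)
        rw [this]
    have hcards : Fintype.card ((Fin (Fintype.card V - (k+1)) × Fin 2)
        ⊕ Fin (2 * (k+1) - Fintype.card V)) = Fintype.card V := by
      simp only [Fintype.card_sum, Fintype.card_prod, Fintype.card_fin]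
      omega
    have hgbij : Function.Bijective g :=
      (Fintype.bijective_iff_injective_and_card g).2 ⟨hginj, hcards⟩
    refine ⟨⟨(Equiv.ofBijective g hgbij).symm, ?_⟩, ?_⟩
    · intro σ
      have hmem : ∀ z, z ∈ σ.image ((Equiv.ofBijective g hgbij).symm) ↔ g z ∈ σ := by
        intro z
        rw [mem_image_equiv', Equiv.symm_symm]
        exact Iff.rfl
      rw [hchar σ]
      show _ ↔ σ.image _ ∈ (Finset.univ.filter _)
      rw [Finset.mem_filter]
      simp only [Finset.mem_univ, true_and]
      constructor
      · intro hcond i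
        have hsub : ∀ v : (Fin (Fintype.card V - (k+1)) × Fin 2)
            ⊕ Fin (2 * (k+1) - Fintype.card V),
            (Sum.elim (fun p => p.1 = i) (fun _ => False) v)
              ↔ (v = Sum.inl (i, 0) ∨ v = Sum.inl (i, 1)) := by
          rintro (⟨i'', b⟩ | j)
          · simp only [Sum.elim_inl]
            constructor
            · rintro rfl
              rcases hfin2 b with rfl | rfl
              · exact Or.inl rfl
              · exact Or.inr rfl
            · rintro (h | h)
              · injection h with h'
                exact congrArg Prod.fst h'
              · injection h with h'
                exact congrArg Prod.fst h'
          · simp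
        rw [card_filter_le_one_iff _ _ (by simp) hsub, hmem, hmem, hg0, hg1]
        intro hboth
        exact hcond _ (hWnotσ₀ i) ⟨hboth.1, hboth.2⟩
      · intro hcond w hw hboth
        have hwW : w ∈ W := (hWmem w).2 hw
        have hcond' := hcond (eqW ⟨w, hwW⟩)
        have hsub : ∀ v : (Fin (Fintype.card V - (k+1)) × Fin 2)
            ⊕ Fin (2 * (k+1) - Fintype.card V),
            (Sum.elim (fun p => p.1 = eqW ⟨w, hwW⟩) (fun _ => False) v)
              ↔ (v = Sum.inl (eqW ⟨w, hwW⟩, 0) ∨ v = Sum.inl (eqW ⟨w, hwW⟩, 1)) := by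
          rintro (⟨i'', b⟩ | j)
          · simp only [Sum.elim_inl]
            constructor
            · rintro rfl
              rcases hfin2 b with rfl | rfl
              · exact Or.inl rfl
              · exact Or.inr rfl
            · rintro (h | h)
              · injection h with h'
                exact congrArg Prod.fst h'
              · injection h with h'
                exact congrArg Prod.fst h'
          · simp
        rw [card_filter_le_one_iff _ _ (by simp) hsub, hmem, hmem, hg0, hg1] at hcond'
        apply hcond'
        rw [Equiv.symm_apply_apply]
        exact hboth
    · apply le_antisymm
      · exact Finset.sup_le hcardle
      · calc (k+1) = sh₀.1.card := hσ₀c.symm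
          _ ≤ X.faces.sup Finset.card := Finset.le_sup hσ₀f
end

section
/- Let X be a clique complex on n vertices, k ≥ 0, and σ_0 a k-simplex of X with deg_X(σ_0) = 0 and Σ_{τ ∈ σ_0(k−1)} deg_X(τ) = n. Then for every vertex v ∉ σ_0 there is exactly one vertex u ∈ σ_0 with {u,v} not an edge of X. -/
open Matrix BigOperators

private lemma deg_count {V : Type} [Fintype V] [DecidableEq V] (X : SC V) (τ : Finset V) :
    X.deg τ = (Finset.univ.filter fun w => w ∉ τ ∧ insert w τ ∈ X.faces).card := by
  rw [SC.deg]
  symm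
  apply Finset.card_bij (fun w _ => insert w τ)
  · intro w hw
    simp only [Finset.mem_filter, Finset.mem_univ, true_and] at hw
    exact Finset.mem_filter.2 ⟨hw.2, Finset.subset_insert _ _,
      Finset.card_insert_of_notMem hw.1⟩
  · intro a ha b hb h
    simp only [Finset.mem_filter, Finset.mem_univ, true_and] at ha hb
    have : a ∈ insert b τ := h ▸ Finset.mem_insert_self a τ
    rcases Finset.mem_insert.1 this with h' | h'
    · exact h'
    · exact absurd h' ha.1
  · intro η hη
    simp only [Finset.mem_filter] at hη
    obtain ⟨hηf, hsub, hc⟩ := hη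
    have hcd : (η \ τ).card = 1 := by
      rw [Finset.card_sdiff_of_subset hsub, hc]; omega
    obtain ⟨w, hw⟩ := Finset.card_eq_one.1 hcd
    have hwmem : w ∈ η \ τ := hw ▸ Finset.mem_singleton_self w
    rw [Finset.mem_sdiff] at hwmem
    have heq : insert w τ = η := by
      have h2 := Finset.union_sdiff_of_subset hsub
      rw [hw] at h2
      rw [Finset.insert_eq, Finset.union_comm]
      exact h2
    exact ⟨w, Finset.mem_filter.2 ⟨Finset.mem_univ w, hwmem.2, heq ▸ hηf⟩, heq⟩

/-- Let `X` be a clique complex on `n` vertices and `σ₀` a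
`k`-simplex with `deg(σ₀) = 0` and `Σ_{τ ∈ σ₀(k-1)} deg(τ) = n`. Then every vertex
`v ∉ σ₀` has exactly one vertex `u ∈ σ₀` with `{u, v}` not an edge of `X`. -/
theorem clique_unique_nonneighbor {V : Type} [Fintype V] [DecidableEq V] [LinearOrder V]
    (X : SC V) (hflag : X.Flag) (hvert : ∀ v : V, {v} ∈ X.faces)
    (k : ℕ) (σ₀ : Finset V) (hσ : σ₀ ∈ X.faces) (hcard : σ₀.card = k + 1)
    (hdeg : X.deg σ₀ = 0)
    (hsum : ∑ u ∈ σ₀, X.deg (σ₀.erase u) = Fintype.card V) :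
    ∀ v : V, v ∉ σ₀ → ∃! u : V, u ∈ σ₀ ∧ ({u, v} : Finset V) ∉ X.faces := by
  intro v hv
  classical
  -- σ₀ has no cofacets
  have hnoco : ∀ w : V, w ∉ σ₀ → insert w σ₀ ∉ X.faces := by
    intro w hw hmem
    have hm : insert w σ₀ ∈ X.faces.filter fun η => σ₀ ⊆ η ∧ η.card = σ₀.card + 1 :=
      Finset.mem_filter.2 ⟨hmem, Finset.subset_insert _ _, Finset.card_insert_of_notMem hw⟩
    rw [SC.deg, Finset.card_eq_zero] at hdeg
    rw [hdeg] at hm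
    exact absurd hm (Finset.notMem_empty _)
  set f : V → ℕ := fun w =>
    (σ₀.filter fun u => w ∉ σ₀.erase u ∧ insert w (σ₀.erase u) ∈ X.faces).card with hf
  have h1 : ∑ w : V, f w = ∑ u ∈ σ₀, X.deg (σ₀.erase u) := by
    simp only [hf, deg_count X, Finset.card_filter]
    exact Finset.sum_comm
  -- helper: a face insert w (σ₀.erase c) gives edges {w,x} for x ≠ c
  have hsubpair : ∀ w : V, ∀ c ∈ σ₀, insert w (σ₀.erase c) ∈ X.faces →
      ∀ x ∈ σ₀, x ≠ c → ({w, x} : Finset V) ∈ X.faces := by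
    intro w c hc hface x hx hxc
    apply X.down_closed _ hface
    intro y hy
    rcases Finset.mem_insert.1 hy with rfl | h
    · exact Finset.mem_insert_self _ _
    · rw [Finset.mem_singleton] at h
      subst h
      exact Finset.mem_insert_of_mem (Finset.mem_erase.2 ⟨hxc, hx⟩)
  have hfle : ∀ w : V, f w ≤ 1 := by
    intro w
    by_cases hwσ : w ∈ σ₀
    · apply Finset.card_le_one.2
      intro a ha b hb
      simp only [Finset.mem_filter] at ha hb
      have ha' : a = w := by
        by_contra hne
        exact ha.2.1 (Finset.mem_erase.2 ⟨fun h => hne h.symm, hwσ⟩)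
      have hb' : b = w := by
        by_contra hne
        exact hb.2.1 (Finset.mem_erase.2 ⟨fun h => hne h.symm, hwσ⟩)
      rw [ha', hb']
    · apply Finset.card_le_one.2
      intro a ha b hb
      simp only [Finset.mem_filter] at ha hb
      by_contra hne
      apply hnoco w hwσ
      apply hflag
      intro x hx y hy
      rcases Finset.mem_insert.1 hx with rfl | hx' <;>
        rcases Finset.mem_insert.1 hy with rfl | hy'
      · rw [Finset.insert_eq_self.2 (Finset.mem_singleton_self _)]
        exact hvert _
      · rcases (show y ≠ a ∨ y ≠ b by
            by_contra hc; push_neg at hc; exact hne (hc.1.symm.trans hc.2)) with h | h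
        · exact hsubpair _ a ha.1 ha.2.2 y hy' h
        · exact hsubpair _ b hb.1 hb.2.2 y hy' h
      · rw [Finset.pair_comm]
        rcases (show x ≠ a ∨ x ≠ b by
            by_contra hc; push_neg at hc; exact hne (hc.1.symm.trans hc.2)) with h | h
        · exact hsubpair _ a ha.1 ha.2.2 x hx' h
        · exact hsubpair _ b hb.1 hb.2.2 x hx' h
      · exact X.down_closed σ₀ hσ _ (by
          simp [Finset.insert_subset_iff, hx', hy'])
  -- f v ≠ 0
  have hfv : f v ≠ 0 := by
    intro h0
    have hlt : ∑ w : V, f w < ∑ _w : V, 1 :=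
      Finset.sum_lt_sum (fun i _ => hfle i)
        ⟨v, Finset.mem_univ v, by rw [h0]; norm_num⟩
    rw [h1, hsum] at hlt
    simp [Finset.card_univ] at hlt
  obtain ⟨u₀, hu₀⟩ := Finset.card_pos.mp (Nat.pos_of_ne_zero hfv)
  simp only [Finset.mem_filter] at hu₀
  obtain ⟨hu₀σ, -, hface₀⟩ := hu₀
  -- P : all vertices of σ₀ other than u₀ are neighbors of v
  have P : ∀ x ∈ σ₀, x ≠ u₀ → ({x, v} : Finset V) ∈ X.faces := by
    intro x hx hxne
    apply X.down_closed _ hface₀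
    intro y hy
    rcases Finset.mem_insert.1 hy with rfl | h
    · exact Finset.mem_insert_of_mem (Finset.mem_erase.2 ⟨hxne, hx⟩)
    · rw [Finset.mem_singleton] at h
      subst h
      exact Finset.mem_insert_self _ _
  -- existence of a non-neighbor
  have hex : ∃ u ∈ σ₀, ({u, v} : Finset V) ∉ X.faces := by
    by_contra hcon
    push_neg at hcon
    apply hnoco v hv
    apply hflag
    intro x hx y hy
    rcases Finset.mem_insert.1 hx with rfl | hx' <;>
      rcases Finset.mem_insert.1 hy with rfl | hy'
    · rw [Finset.insert_eq_self.2 (Finset.mem_singleton_self _)]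
      exact hvert _
    · rw [Finset.pair_comm]; exact hcon y hy'
    · exact hcon x hx'
    · exact X.down_closed σ₀ hσ _ (by simp [Finset.insert_subset_iff, hx', hy'])
  obtain ⟨u, huσ, hune⟩ := hex
  refine ⟨u, ⟨huσ, hune⟩, ?_⟩
  rintro y ⟨hyσ, hyne⟩
  have hy0 : y = u₀ := by
    by_contra h
    exact hyne (P y hyσ h)
  have hu0 : u = u₀ := by
    by_contra h
    exact hune (P u huσ h)
  rw [hy0, hu0]
end

section
/- For k ≥ 0, the reduced k-Laplacian of a finite simplicial complex X decomposes as L_k = D_k + K_k, where K_k is a positive semi-definite matrix (the Bochner/signed-graph Laplacian) and D_k is the diagonal matrix with entries D_k(σ,σ) = 2(k+1) + (k+2)·deg_X(σ) − Σ_{τ ∈ σ(k−1)} deg_X(τ). -/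
open Matrix BigOperators

set_option linter.unusedSectionVars false
set_option linter.unusedVariables false

section Aux
open Finset

namespace Bochner

open SC

variable {V : Type} [Fintype V] [DecidableEq V] [LinearOrder V] (X : SC V) (n : ℕ)

/-- edge condition of the signed graph -/
def Ecnd (α β : Finset V) : Prop := (α ∩ β).card = n ∧ α ∪ β ∉ X.faces

instance : ∀ α β : Finset V, Decidable (Ecnd X n α β) := fun α β => by
  unfold Ecnd; infer_instance

/-- signed incidence matrix, indexed by ordered pairs -/
def H : Matrix (X.face (n+1)) (X.face (n+1) × X.face (n+1)) ℝ :=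
  fun σ e => if Ecnd X n e.1.1 e.2.1 ∧ (σ = e.1 ∨ σ = e.2)
    then SC.sgn σ.1 (e.1.1 ∩ e.2.1) else 0

/-- sign helper lemmas -/
lemma sgn_single {a : V} {σ τ : Finset V} (h : σ \ τ = {a}) :
    SC.sgn σ τ = (-1 : ℝ) ^ (σ.filter fun w => w < a).card := by
  simp [SC.sgn, h]

lemma sgn_sq {a : V} {σ τ : Finset V} (h : σ \ τ = {a}) :
    SC.sgn σ τ * SC.sgn σ τ = 1 := by
  rw [sgn_single h, ← pow_add]
  exact (neg_one_pow_eq_one_iff_even (by norm_num)).2 ⟨_, rfl⟩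

lemma filter_lt_insert_self (ρ : Finset V) (a : V) :
    ((insert a ρ).filter fun w => w < a) = ρ.filter fun w => w < a := by
  rw [Finset.filter_insert]; simp

lemma sgn_insert (ρ : Finset V) (a : V) (ha : a ∉ ρ) :
    SC.sgn (insert a ρ) ρ = (-1 : ℝ) ^ (ρ.filter fun w => w < a).card := by
  rw [sgn_single (a := a) (by simp [Finset.insert_sdiff_of_mem, Finset.sdiff_eq_empty_iff_subset.2 (Finset.subset_insert a ρ), ha]), filter_lt_insert_self]

lemma filter_lt_insert_other (ρ : Finset V) (a b : V) (hb : b ∉ ρ) (hab : a ≠ b) :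
    (((insert b ρ).filter fun w => w < a)).card
      = (ρ.filter fun w => w < a).card + (if b < a then 1 else 0) := by
  rw [Finset.filter_insert]
  split
  · rename_i h
    rw [Finset.card_insert_of_notMem (by simp [hb])]
  · simp [*]

lemma sign_key (ρ : Finset V) (a b : V) (ha : a ∉ ρ) (hb : b ∉ ρ) (hab : a ≠ b) :
    SC.sgn (insert a (insert b ρ)) (insert b ρ) * SC.sgn (insert a (insert b ρ)) (insert a ρ)
      + SC.sgn (insert a ρ) ρ * SC.sgn (insert b ρ) ρ = 0 := by
  have ha' : a ∉ insert b ρ := by simp [ha, hab]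
  have hb' : b ∉ insert a ρ := by simp [hb, hab.symm]
  have h1 : SC.sgn (insert a (insert b ρ)) (insert b ρ)
      = (-1 : ℝ) ^ (((insert b ρ).filter fun w => w < a).card) := by
    rw [sgn_single (a := a)
      (by simp [Finset.insert_sdiff_of_mem, Finset.sdiff_eq_empty_iff_subset.2 (Finset.subset_insert a _), ha']),
      filter_lt_insert_self]
  have h2 : SC.sgn (insert a (insert b ρ)) (insert a ρ)
      = (-1 : ℝ) ^ (((insert a ρ).filter fun w => w < b).card) := by
    rw [Finset.insert_comm, sgn_single (a := b)
      (by simp [Finset.insert_sdiff_of_mem, Finset.sdiff_eq_empty_iff_subset.2 (Finset.subset_insert b _), hb']),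
      filter_lt_insert_self]
  rw [h1, h2, sgn_insert ρ a ha, sgn_insert ρ b hb,
    filter_lt_insert_other ρ a b hb hab, filter_lt_insert_other ρ b a ha hab.symm]
  rcases lt_or_gt_of_ne hab with h | h
  · rw [if_neg (asymm h), if_pos h]
    ring
  · rw [if_pos h, if_neg (asymm h)]
    ring


lemma eq_insert_of_subset_card {σ τ : Finset V} (h : τ ⊆ σ) (hc : σ.card = τ.card + 1) :
    ∃ a, a ∉ τ ∧ σ = insert a τ ∧ σ \ τ = {a} := by
  have h1 : (σ \ τ).card = 1 := by rw [Finset.card_sdiff_of_subset h]; omega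
  obtain ⟨a, haeq⟩ := Finset.card_eq_one.1 h1
  have ha : a ∈ σ \ τ := haeq ▸ Finset.mem_singleton_self a
  rw [Finset.mem_sdiff] at ha
  refine ⟨a, ha.2, ?_, haeq⟩
  have h2 : τ ∪ (σ \ τ) = σ := Finset.union_sdiff_of_subset h
  rw [← h2, haeq]
  ext x; simp [or_comm]

lemma pair_struct {σ τ : Finset V} (hσ : σ.card = n + 1) (hτ : τ.card = n + 1)
    (hint : (σ ∩ τ).card = n) :
    ∃ a b, a ∉ σ ∩ τ ∧ b ∉ σ ∩ τ ∧ a ≠ b ∧ σ = insert a (σ ∩ τ) ∧ τ = insert b (σ ∩ τ) ∧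
      σ ∪ τ = insert a (insert b (σ ∩ τ)) := by
  obtain ⟨a, ha, haσ, -⟩ := eq_insert_of_subset_card (σ := σ) (τ := σ ∩ τ) Finset.inter_subset_left (by omega)
  obtain ⟨b, hb, hbτ, -⟩ := eq_insert_of_subset_card (σ := τ) (τ := σ ∩ τ) Finset.inter_subset_right (by omega)
  have hanb : a ≠ b := by
    rintro rfl
    have h1 : a ∈ σ := haσ ▸ Finset.mem_insert_self _ _
    have h2 : a ∈ τ := hbτ ▸ Finset.mem_insert_self _ _
    exact ha (Finset.mem_inter.2 ⟨h1, h2⟩)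
  refine ⟨a, b, ha, hb, hanb, haσ, hbτ, ?_⟩
  conv_lhs => rw [haσ, hbτ]
  ext x; simp; tauto

lemma sum_face_indicator (k : ℕ) (p : Finset V → Prop) [DecidablePred p] :
    ∑ η : X.face k, (if p η.1 then (1 : ℝ) else 0)
      = ((X.faces.filter fun η => p η ∧ η.card = k).card : ℝ) := by
  rw [Finset.sum_boole]
  norm_cast
  apply Finset.card_bij (fun η _ => η.1)
  · intro η hη
    simp only [Finset.mem_filter] at hη ⊢
    exact ⟨η.2.1, hη.2, η.2.2⟩
  · intro η _ η' _ h
    exact Subtype.ext h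
  · intro τ hτ
    simp only [Finset.mem_filter] at hτ
    exact ⟨⟨τ, ⟨hτ.1, hτ.2.2⟩⟩, by simp [hτ.2.1], rfl⟩

lemma sum_face_ite_eq (k : ℕ) (A : Finset V) (c : X.face k → ℝ) :
    ∑ η : X.face k, (if η.1 = A then c η else 0)
      = if h : A ∈ X.faces ∧ A.card = k then c ⟨A, h⟩ else 0 := by
  split
  · rename_i h
    rw [Finset.sum_eq_single (⟨A, h⟩ : X.face k)]
    · simp
    · intro η _ hne
      exact if_neg (fun he => hne (Subtype.ext he))
    · intro habs; exact absurd (Finset.mem_univ _) habs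
  · rename_i h
    apply Finset.sum_eq_zero
    intro η _
    rw [if_neg]
    rintro rfl
    exact h η.2

lemma up_apply (σ τ : X.face (n + 1)) :
    ((X.CB (n + 1))ᵀ * X.CB (n + 1)) σ τ
      = ∑ η : X.face (n + 2), (if σ.1 ⊆ η.1 then SC.sgn η.1 σ.1 else 0)
          * (if τ.1 ⊆ η.1 then SC.sgn η.1 τ.1 else 0) := by
  simp [Matrix.mul_apply, Matrix.transpose_apply, SC.CB]

lemma down_apply (σ τ : X.face (n + 1)) :
    (X.CB n * (X.CB n)ᵀ) σ τ
      = ∑ ρ : X.face n, (if ρ.1 ⊆ σ.1 then SC.sgn σ.1 ρ.1 else 0)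
          * (if ρ.1 ⊆ τ.1 then SC.sgn τ.1 ρ.1 else 0) := by
  simp [Matrix.mul_apply, Matrix.transpose_apply, SC.CB]

lemma up_diag (σ : X.face (n + 1)) :
    ((X.CB (n + 1))ᵀ * X.CB (n + 1)) σ σ = (X.deg σ.1 : ℝ) := by
  rw [up_apply]
  have h1 : ∀ η : X.face (n + 2),
      (if σ.1 ⊆ η.1 then SC.sgn η.1 σ.1 else 0) * (if σ.1 ⊆ η.1 then SC.sgn η.1 σ.1 else 0)
        = if σ.1 ⊆ η.1 then (1 : ℝ) else 0 := by
    intro η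
    by_cases h : σ.1 ⊆ η.1
    · obtain ⟨a, -, -, hd⟩ := eq_insert_of_subset_card h (by have := σ.2.2; have := η.2.2; omega)
      simp [h, sgn_sq hd]
    · simp [h]
  rw [Finset.sum_congr rfl (fun η _ => h1 η), sum_face_indicator]
  unfold SC.deg
  norm_cast
  congr 1
  apply Finset.filter_congr
  intro η _
  rw [σ.2.2]

lemma up_offdiag_n (σ τ : X.face (n + 1)) (hint : (σ.1 ∩ τ.1).card = n) :
    ((X.CB (n + 1))ᵀ * X.CB (n + 1)) σ τ
      = if (σ.1 ∪ τ.1) ∈ X.faces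
          then SC.sgn (σ.1 ∪ τ.1) σ.1 * SC.sgn (σ.1 ∪ τ.1) τ.1 else 0 := by
  have hcu : (σ.1 ∪ τ.1).card = n + 2 := by
    have := Finset.card_union_add_card_inter σ.1 τ.1
    have h1 := σ.2.2; have h2 := τ.2.2; omega
  rw [up_apply]
  have h1 : ∀ η : X.face (n + 2),
      (if σ.1 ⊆ η.1 then SC.sgn η.1 σ.1 else 0) * (if τ.1 ⊆ η.1 then SC.sgn η.1 τ.1 else 0)
        = if η.1 = σ.1 ∪ τ.1 then SC.sgn η.1 σ.1 * SC.sgn η.1 τ.1 else 0 := by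
    intro η
    by_cases h : η.1 = σ.1 ∪ τ.1
    · rw [if_pos h, if_pos (h ▸ Finset.subset_union_left),
        if_pos (h ▸ Finset.subset_union_right)]
    · have : ¬ (σ.1 ⊆ η.1 ∧ τ.1 ⊆ η.1) := by
        rintro ⟨hs, ht⟩
        exact h ((Finset.eq_of_subset_of_card_le (Finset.union_subset hs ht)
          (by rw [hcu, η.2.2])).symm)
      rw [if_neg h]
      by_cases hs : σ.1 ⊆ η.1
      · rw [if_neg (fun ht => this ⟨hs, ht⟩), mul_zero]
      · rw [if_neg hs, zero_mul]
  rw [Finset.sum_congr rfl (fun η _ => h1 η), sum_face_ite_eq]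
  by_cases hU : σ.1 ∪ τ.1 ∈ X.faces
  · rw [dif_pos ⟨hU, hcu⟩, if_pos hU]
  · rw [dif_neg (fun h => hU h.1), if_neg hU]

lemma up_offdiag_far (σ τ : X.face (n + 1)) (hint : (σ.1 ∩ τ.1).card < n) :
    ((X.CB (n + 1))ᵀ * X.CB (n + 1)) σ τ = 0 := by
  rw [up_apply]
  apply Finset.sum_eq_zero
  intro η _
  by_cases hs : σ.1 ⊆ η.1
  · have ht : ¬ τ.1 ⊆ η.1 := by
      intro ht
      have h1 := Finset.card_le_card (Finset.union_subset hs ht)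
      have h2 := Finset.card_union_add_card_inter σ.1 τ.1
      have h3 := σ.2.2; have h4 := τ.2.2; have h5 := η.2.2
      omega
    rw [if_pos hs, if_neg ht, mul_zero]
  · rw [if_neg hs, zero_mul]

lemma facet_count {σ : Finset V} (hσ : σ ∈ X.faces) (hc : σ.card = n + 1) :
    (X.faces.filter fun ρ => ρ ⊆ σ ∧ ρ.card = n).card = n + 1 := by
  have himg : (X.faces.filter fun ρ => ρ ⊆ σ ∧ ρ.card = n) = σ.image (σ.erase ·) := by
    ext ρ
    simp only [Finset.mem_filter, Finset.mem_image]
    constructor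
    · rintro ⟨hmem, hsub, hcard⟩
      obtain ⟨a, ha, rfl, -⟩ := eq_insert_of_subset_card hsub (by omega)
      refine ⟨a, by simp, ?_⟩
      rw [Finset.erase_insert ha]
    · rintro ⟨a, ha, rfl⟩
      exact ⟨X.down_closed σ hσ _ (Finset.erase_subset _ _), Finset.erase_subset _ _,
        by rw [Finset.card_erase_of_mem ha, hc]; omega⟩
  rw [himg, Finset.card_image_of_injOn, hc]
  intro u hu v hv h
  dsimp only at h
  by_contra hne
  have h2 : u ∈ σ.erase v := Finset.mem_erase.2 ⟨hne, hu⟩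
  rw [← h] at h2
  exact (Finset.mem_erase.1 h2).1 rfl

lemma down_diag (σ : X.face (n + 1)) :
    (X.CB n * (X.CB n)ᵀ) σ σ = ((n : ℝ) + 1) := by
  rw [down_apply]
  have h1 : ∀ ρ : X.face n,
      (if ρ.1 ⊆ σ.1 then SC.sgn σ.1 ρ.1 else 0) * (if ρ.1 ⊆ σ.1 then SC.sgn σ.1 ρ.1 else 0)
        = if ρ.1 ⊆ σ.1 then (1 : ℝ) else 0 := by
    intro ρ
    by_cases h : ρ.1 ⊆ σ.1
    · obtain ⟨a, -, -, hd⟩ := eq_insert_of_subset_card h (by have := σ.2.2; have := ρ.2.2; omega)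
      simp [h, sgn_sq hd]
    · simp [h]
  rw [Finset.sum_congr rfl (fun ρ _ => h1 ρ), sum_face_indicator X n (fun ρ => ρ ⊆ σ.1),
    facet_count X n σ.2.1 σ.2.2]
  push_cast; ring

lemma down_offdiag_n (σ τ : X.face (n + 1)) (hint : (σ.1 ∩ τ.1).card = n) :
    (X.CB n * (X.CB n)ᵀ) σ τ = SC.sgn σ.1 (σ.1 ∩ τ.1) * SC.sgn τ.1 (σ.1 ∩ τ.1) := by
  rw [down_apply]
  have h1 : ∀ ρ : X.face n,
      (if ρ.1 ⊆ σ.1 then SC.sgn σ.1 ρ.1 else 0) * (if ρ.1 ⊆ τ.1 then SC.sgn τ.1 ρ.1 else 0)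
        = if ρ.1 = σ.1 ∩ τ.1 then SC.sgn σ.1 ρ.1 * SC.sgn τ.1 ρ.1 else 0 := by
    intro ρ
    by_cases h : ρ.1 = σ.1 ∩ τ.1
    · rw [if_pos h, if_pos (h ▸ Finset.inter_subset_left),
        if_pos (h ▸ Finset.inter_subset_right)]
    · have : ¬ (ρ.1 ⊆ σ.1 ∧ ρ.1 ⊆ τ.1) := by
        rintro ⟨hs, ht⟩
        exact h (Finset.eq_of_subset_of_card_le (Finset.subset_inter hs ht)
          (by rw [hint, ρ.2.2]))
      rw [if_neg h]
      by_cases hs : ρ.1 ⊆ σ.1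
      · rw [if_neg (fun ht => this ⟨hs, ht⟩), mul_zero]
      · rw [if_neg hs, zero_mul]
  rw [Finset.sum_congr rfl (fun ρ _ => h1 ρ), sum_face_ite_eq,
    dif_pos ⟨X.down_closed σ.1 σ.2.1 _ Finset.inter_subset_left, hint⟩]

lemma down_offdiag_far (σ τ : X.face (n + 1)) (hint : (σ.1 ∩ τ.1).card < n) :
    (X.CB n * (X.CB n)ᵀ) σ τ = 0 := by
  rw [down_apply]
  apply Finset.sum_eq_zero
  intro ρ _
  by_cases hs : ρ.1 ⊆ σ.1
  · have ht : ¬ ρ.1 ⊆ τ.1 := by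
      intro ht
      have h1 := Finset.card_le_card (Finset.subset_inter hs ht)
      have h2 := ρ.2.2
      omega
    rw [if_pos hs, if_neg ht, mul_zero]
  · rw [if_neg hs, zero_mul]

/-- number of neighbours in the signed graph -/
def dG (σ : Finset V) : ℕ :=
  (X.faces.filter fun τ => τ.card = n + 1 ∧ (σ ∩ τ).card = n ∧ σ ∪ τ ∉ X.faces).card

lemma sum_deg_erase {σ : Finset V} (hσ : σ ∈ X.faces) (hc : σ.card = n + 1) :
    ∑ u ∈ σ, X.deg (σ.erase u)
      = (n + 1) + (X.faces.filter fun τ => τ.card = n + 1 ∧ (σ ∩ τ).card = n).card := by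
  set T : V → Finset (Finset V) :=
    fun u => X.faces.filter fun τ => σ.erase u ⊆ τ ∧ τ.card = n + 1 ∧ τ ≠ σ with hT
  have key : ∀ u ∈ σ, X.deg (σ.erase u) = (T u).card + 1 := by
    intro u hu
    unfold SC.deg
    have hce : (σ.erase u).card = n := by rw [Finset.card_erase_of_mem hu, hc]; omega
    have hins : (X.faces.filter fun η => σ.erase u ⊆ η ∧ η.card = (σ.erase u).card + 1)
        = insert σ (T u) := by
      ext τ
      simp only [hT, Finset.mem_filter, Finset.mem_insert]
      constructor
      · rintro ⟨h1, h2, h3⟩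
        by_cases hts : τ = σ
        · exact Or.inl hts
        · exact Or.inr ⟨h1, h2, by omega, hts⟩
      · rintro (rfl | ⟨h1, h2, h3, h4⟩)
        · exact ⟨hσ, Finset.erase_subset _ _, by omega⟩
        · exact ⟨h1, h2, by omega⟩
    rw [hins, Finset.card_insert_of_notMem (by simp [hT])]
  rw [Finset.sum_congr rfl key, Finset.sum_add_distrib, Finset.sum_const, hc, smul_eq_mul,
    mul_one, add_comm]
  congr 1
  have hdisj : ∀ u ∈ σ, ∀ v ∈ σ, u ≠ v → Disjoint (T u) (T v) := by
    intro u hu v hv huv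
    rw [Finset.disjoint_left]
    intro τ h1 h2
    simp only [hT, Finset.mem_filter] at h1 h2
    apply h1.2.2.2
    have hsub : σ ⊆ τ := by
      intro x hx
      by_cases hxu : x = u
      · exact h2.2.1 (Finset.mem_erase.2 ⟨hxu ▸ huv, hxu ▸ hu⟩)
      · exact h1.2.1 (Finset.mem_erase.2 ⟨hxu, hx⟩)
    exact (Finset.eq_of_subset_of_card_le hsub (by omega)).symm
  rw [← Finset.card_biUnion hdisj]
  congr 1
  ext τ
  simp only [Finset.mem_biUnion, hT, Finset.mem_filter]
  constructor
  · rintro ⟨u, hu, hmem, hsub, hcard, hne⟩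
    have hut : u ∉ τ := by
      intro hut
      apply hne
      have hsub2 : σ ⊆ τ := by
        intro x hx
        by_cases hxu : x = u
        · exact hxu ▸ hut
        · exact hsub (Finset.mem_erase.2 ⟨hxu, hx⟩)
      exact (Finset.eq_of_subset_of_card_le hsub2 (by omega)).symm
    have hint : σ ∩ τ = σ.erase u := by
      apply Finset.Subset.antisymm
      · intro x hx
        rw [Finset.mem_inter] at hx
        exact Finset.mem_erase.2 ⟨fun h => hut (h ▸ hx.2), hx.1⟩
      · intro x hx
        exact Finset.mem_inter.2 ⟨(Finset.erase_subset _ _) hx, hsub hx⟩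
    refine ⟨hmem, hcard, ?_⟩
    rw [hint, Finset.card_erase_of_mem hu, hc]
    omega
  · rintro ⟨hmem, hcard, hint⟩
    obtain ⟨u, hu, hins, -⟩ := eq_insert_of_subset_card
      (Finset.inter_subset_left (s₁ := σ) (s₂ := τ)) (by omega)
    have huσ : u ∈ σ := hins ▸ Finset.mem_insert_self _ _
    have hut : u ∉ τ := fun h => hu (Finset.mem_inter.2 ⟨huσ, h⟩)
    refine ⟨u, huσ, hmem, ?_, hcard, fun h => hut (h ▸ huσ)⟩
    have herase : σ.erase u = σ ∩ τ := by
      conv_lhs => rw [hins]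
      rw [Finset.erase_insert hu]
    rw [herase]
    exact Finset.inter_subset_right

lemma count_A {σ : Finset V} (hσ : σ ∈ X.faces) (hc : σ.card = n + 1) :
    (X.faces.filter fun τ => τ.card = n + 1 ∧ (σ ∩ τ).card = n ∧ σ ∪ τ ∈ X.faces).card
      = (n + 1) * X.deg σ := by
  set C : Finset (Finset V) := X.faces.filter fun η => σ ⊆ η ∧ η.card = σ.card + 1 with hC
  have heq : (X.faces.filter fun τ => τ.card = n + 1 ∧ (σ ∩ τ).card = n ∧ σ ∪ τ ∈ X.faces)
      = C.biUnion fun η => σ.image fun u => η.erase u := by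
    ext τ
    simp only [hC, Finset.mem_biUnion, Finset.mem_filter, Finset.mem_image]
    constructor
    · rintro ⟨hmem, hcard, hint, hU⟩
      have hcu : (σ ∪ τ).card = n + 2 := by
        have := Finset.card_union_add_card_inter σ τ
        omega
      have hsd : (σ \ τ).card = 1 := by
        have := Finset.card_inter_add_card_sdiff σ τ
        omega
      obtain ⟨u, husd⟩ := Finset.card_eq_one.1 hsd
      have hu : u ∈ σ \ τ := husd ▸ Finset.mem_singleton_self u
      rw [Finset.mem_sdiff] at hu
      refine ⟨σ ∪ τ, ⟨hU, Finset.subset_union_left, by omega⟩, u, hu.1, ?_⟩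
      ext x
      simp only [Finset.mem_erase, Finset.mem_union]
      constructor
      · rintro ⟨hxu, hx | hx⟩
        · by_contra hxt
          have : x ∈ σ \ τ := Finset.mem_sdiff.2 ⟨hx, hxt⟩
          rw [husd] at this
          exact hxu (Finset.mem_singleton.1 this)
        · exact hx
      · intro hx
        exact ⟨fun h => hu.2 (h ▸ hx), Or.inr hx⟩
    · rintro ⟨η, hη, u, hu, rfl⟩
      have hη1 : η ∈ X.faces := hη.1
      have hη2 : σ ⊆ η := hη.2.1
      have hη3 : η.card = n + 2 := by
        have := hη.2.2
        omega
      have huη : u ∈ η := hη2 hu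
      have hUeq : σ ∪ η.erase u = η := by
        apply Finset.Subset.antisymm
        · exact Finset.union_subset hη2 (Finset.erase_subset _ _)
        · intro x hx
          by_cases hxu : x = u
          · exact Finset.mem_union.2 (Or.inl (hxu ▸ hu))
          · exact Finset.mem_union.2 (Or.inr (Finset.mem_erase.2 ⟨hxu, hx⟩))
      have hIeq : σ ∩ η.erase u = σ.erase u := by
        ext x
        simp only [Finset.mem_inter, Finset.mem_erase]
        constructor
        · rintro ⟨h1, h2, h3⟩; exact ⟨h2, h1⟩
        · rintro ⟨h1, h2⟩; exact ⟨h2, h1, hη2 h2⟩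
      refine ⟨X.down_closed η hη1 _ (Finset.erase_subset _ _),
        by rw [Finset.card_erase_of_mem huη]; omega, ?_, ?_⟩
      · rw [hIeq, Finset.card_erase_of_mem hu]; omega
      · rw [hUeq]; exact hη1
  rw [heq, Finset.card_biUnion]
  · have himg : ∀ η ∈ C, (σ.image fun u => η.erase u).card = n + 1 := by
      intro η hη
      rw [hC] at hη
      have hη2 : σ ⊆ η := (Finset.mem_filter.1 hη).2.1
      rw [Finset.card_image_of_injOn, hc]
      intro u hu v hv h
      dsimp only at h
      by_contra hne
      have h2 : u ∈ η.erase v := Finset.mem_erase.2 ⟨hne, hη2 hu⟩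
      rw [← h] at h2
      exact (Finset.mem_erase.1 h2).1 rfl
    rw [Finset.sum_congr rfl himg, Finset.sum_const, smul_eq_mul]
    unfold SC.deg
    ring
  · intro η hη η' hη' hne
    rw [hC] at hη hη'
    rw [Function.onFun, Finset.disjoint_left]
    rintro τ h1 h2
    simp only [Finset.mem_image] at h1 h2
    obtain ⟨u, hu, rfl⟩ := h1
    obtain ⟨v, hv, hvv⟩ := h2
    have hη2 : σ ⊆ η := (Finset.mem_filter.1 hη).2.1
    have hη2' : σ ⊆ η' := (Finset.mem_filter.1 hη').2.1
    apply hne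
    have e1 : σ ∪ η.erase u = η := by
      apply Finset.Subset.antisymm
      · exact Finset.union_subset hη2 (Finset.erase_subset _ _)
      · intro x hx
        by_cases hxu : x = u
        · exact Finset.mem_union.2 (Or.inl (hxu ▸ hu))
        · exact Finset.mem_union.2 (Or.inr (Finset.mem_erase.2 ⟨hxu, hx⟩))
    have e2 : σ ∪ η'.erase v = η' := by
      apply Finset.Subset.antisymm
      · exact Finset.union_subset hη2' (Finset.erase_subset _ _)
      · intro x hx
        by_cases hxv : x = v
        · exact Finset.mem_union.2 (Or.inl (hxv ▸ hv))
        · exact Finset.mem_union.2 (Or.inr (Finset.mem_erase.2 ⟨hxv, hx⟩))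
    rw [← e1, ← e2, hvv]

lemma count_split (σ : Finset V) :
    (X.faces.filter fun τ => τ.card = n + 1 ∧ (σ ∩ τ).card = n).card
      = (X.faces.filter fun τ => τ.card = n + 1 ∧ (σ ∩ τ).card = n ∧ σ ∪ τ ∈ X.faces).card
        + dG X n σ := by
  unfold dG
  have h1 : ∀ τ ∈ X.faces.filter fun τ => τ.card = n + 1 ∧ (σ ∩ τ).card = n, True := fun _ _ => trivial
  rw [show (X.faces.filter fun τ => τ.card = n + 1 ∧ (σ ∩ τ).card = n ∧ σ ∪ τ ∈ X.faces)
      = (X.faces.filter fun τ => τ.card = n + 1 ∧ (σ ∩ τ).card = n).filter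
          (fun τ => σ ∪ τ ∈ X.faces) by rw [Finset.filter_filter]; congr 1; ext τ; tauto,
    show (X.faces.filter fun τ => τ.card = n + 1 ∧ (σ ∩ τ).card = n ∧ σ ∪ τ ∉ X.faces)
      = (X.faces.filter fun τ => τ.card = n + 1 ∧ (σ ∩ τ).card = n).filter
          (fun τ => σ ∪ τ ∉ X.faces) by rw [Finset.filter_filter]; congr 1; ext τ; tauto]
  exact (Finset.card_filter_add_card_filter_not (fun τ => σ ∪ τ ∈ X.faces)).symm

lemma Ecnd_symm {α β : Finset V} (h : Ecnd X n α β) : Ecnd X n β α := by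
  unfold Ecnd at h ⊢
  rwa [Finset.inter_comm, Finset.union_comm]

lemma K_psd : ((1/2 : ℝ) • (H X n * (H X n)ᵀ)).PosSemidef := by
  have h1 : (H X n * (H X n)ᵀ).PosSemidef := by
    have := Matrix.posSemidef_self_mul_conjTranspose (H X n)
    rwa [Matrix.conjTranspose_eq_transpose_of_trivial] at this
  constructor
  · have h2 := h1.1
    unfold Matrix.IsHermitian at h2 ⊢
    rw [Matrix.conjTranspose_smul, h2]
    norm_num
  · intro x
    have e : (x.sum fun i xi => x.sum fun j xj => star xi * ((1/2 : ℝ) • (H X n * (H X n)ᵀ)) i j * xj)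
        = (1/2 : ℝ) * (x.sum fun i xi => x.sum fun j xj => star xi * (H X n * (H X n)ᵀ) i j * xj) := by
      simp only [Matrix.smul_apply, smul_eq_mul, Finsupp.sum, Finset.mul_sum]
      exact Finset.sum_congr rfl fun i _ => Finset.sum_congr rfl fun j _ => by ring
    rw [e]
    have := h1.2 x
    exact mul_nonneg (by norm_num) this

lemma K_offdiag (σ τ : X.face (n + 1)) (hne : σ ≠ τ) :
    ((1/2 : ℝ) • (H X n * (H X n)ᵀ)) σ τ
      = if Ecnd X n σ.1 τ.1
          then SC.sgn σ.1 (σ.1 ∩ τ.1) * SC.sgn τ.1 (σ.1 ∩ τ.1) else 0 := by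
  rw [Matrix.smul_apply, Matrix.mul_apply]
  have key : ∀ e : X.face (n + 1) × X.face (n + 1),
      H X n σ e * (H X n)ᵀ e τ
        = (if e = (σ, τ) then
            (if Ecnd X n σ.1 τ.1 then SC.sgn σ.1 (σ.1 ∩ τ.1) * SC.sgn τ.1 (σ.1 ∩ τ.1) else 0)
            else 0)
          + (if e = (τ, σ) then
            (if Ecnd X n σ.1 τ.1 then SC.sgn σ.1 (σ.1 ∩ τ.1) * SC.sgn τ.1 (σ.1 ∩ τ.1) else 0)
            else 0) := by
    intro e
    rw [Matrix.transpose_apply]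
    by_cases h1 : e = (σ, τ)
    · subst h1
      rw [if_pos rfl, if_neg (fun h => hne (Prod.ext_iff.1 h).1)]
      unfold H
      dsimp only
      by_cases hE : Ecnd X n σ.1 τ.1
      · rw [if_pos ⟨hE, Or.inl rfl⟩, if_pos ⟨hE, Or.inr rfl⟩, if_pos hE, add_zero]
      · rw [if_neg (fun h => hE h.1), if_neg hE, zero_mul, add_zero]
    · by_cases h2 : e = (τ, σ)
      · subst h2
        rw [if_neg h1, if_pos rfl, zero_add]
        unfold H
        dsimp only
        by_cases hE : Ecnd X n τ.1 σ.1
        · rw [if_pos ⟨hE, Or.inr rfl⟩, if_pos ⟨hE, Or.inl rfl⟩,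
            if_pos (Ecnd_symm X n hE)]
          rw [Finset.inter_comm τ.1 σ.1]
        · rw [if_neg (fun h => hE h.1), zero_mul, if_neg (fun h => hE (Ecnd_symm X n h))]
      · rw [if_neg h1, if_neg h2, add_zero]
        unfold H
        by_cases hσe : Ecnd X n e.1.1 e.2.1 ∧ (σ = e.1 ∨ σ = e.2)
        · rw [if_pos hσe, if_neg, mul_zero]
          rintro ⟨hE, hτ⟩
          rcases hσe.2 with hσ1 | hσ1 <;> rcases hτ with hτ1 | hτ1
          · exact hne (hσ1.trans hτ1.symm)
          · exact h1 (Prod.ext hσ1.symm hτ1.symm)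
          · exact h2 (Prod.ext hτ1.symm hσ1.symm)
          · exact hne (hσ1.trans hτ1.symm)
        · rw [if_neg hσe, zero_mul]
  rw [Finset.sum_congr rfl (fun e _ => key e), Finset.sum_add_distrib,
    Finset.sum_ite_eq' Finset.univ (σ, τ), Finset.sum_ite_eq' Finset.univ (τ, σ)]
  simp only [Finset.mem_univ, if_pos, smul_eq_mul]
  ring

lemma K_diag (σ : X.face (n + 1)) :
    ((1/2 : ℝ) • (H X n * (H X n)ᵀ)) σ σ = (dG X n σ.1 : ℝ) := by
  rw [Matrix.smul_apply, Matrix.mul_apply]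
  have key : ∀ e : X.face (n + 1) × X.face (n + 1),
      H X n σ e * (H X n)ᵀ e σ
        = (if Ecnd X n e.1.1 e.2.1 ∧ σ = e.1 then (1 : ℝ) else 0)
          + (if Ecnd X n e.1.1 e.2.1 ∧ σ = e.2 then (1 : ℝ) else 0) := by
    rintro ⟨α, β⟩
    rw [Matrix.transpose_apply]
    unfold H
    by_cases hE : Ecnd X n α.1 β.1
    · have hαβ : α ≠ β := by
        rintro rfl
        have h1 := hE.1
        rw [Finset.inter_self] at h1
        have := α.2.2
        omega
      by_cases hσα : σ = α
      · subst hσα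
        have hσβ : σ ≠ β := hαβ
        rw [if_pos ⟨hE, Or.inl rfl⟩, if_pos ⟨hE, rfl⟩,
          if_neg (fun h => hσβ h.2), add_zero]
        have hsub : σ.1 ∩ β.1 ⊆ σ.1 := Finset.inter_subset_left
        obtain ⟨a, -, -, hd⟩ := eq_insert_of_subset_card hsub
          (by have := σ.2.2; have := hE.1; omega)
        exact sgn_sq hd
      · by_cases hσβ : σ = β
        · subst hσβ
          rw [if_pos ⟨hE, Or.inr rfl⟩, if_neg (fun h => hσα h.2),
            if_pos ⟨hE, rfl⟩, zero_add]
          have hsub : α.1 ∩ σ.1 ⊆ σ.1 := Finset.inter_subset_right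
          obtain ⟨a, -, -, hd⟩ := eq_insert_of_subset_card hsub
            (by have := σ.2.2; have := hE.1; omega)
          exact sgn_sq hd
        · rw [if_neg (fun h => h.2.elim hσα hσβ), zero_mul,
            if_neg (fun h => hσα h.2), if_neg (fun h => hσβ h.2), add_zero]
    · rw [if_neg (fun h => hE h.1), zero_mul, if_neg (fun h => hE h.1),
        if_neg (fun h => hE h.1), add_zero]
  rw [Finset.sum_congr rfl (fun e _ => key e), Finset.sum_add_distrib]
  have hs1 : (∑ e : X.face (n + 1) × X.face (n + 1),
      if Ecnd X n e.1.1 e.2.1 ∧ σ = e.1 then (1 : ℝ) else 0) = (dG X n σ.1 : ℝ) := by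
    rw [Fintype.sum_prod_type]
    have h1 : ∀ α : X.face (n + 1),
        (∑ β : X.face (n + 1), if Ecnd X n α.1 β.1 ∧ σ = α then (1 : ℝ) else 0)
          = if σ = α then (∑ β : X.face (n + 1), if Ecnd X n α.1 β.1 then (1 : ℝ) else 0)
            else 0 := by
      intro α
      by_cases h : σ = α
      · subst h
        rw [if_pos rfl]
        exact Finset.sum_congr rfl fun β _ => by rw [if_congr (and_iff_left rfl) rfl rfl]
      · rw [if_neg h]
        exact Finset.sum_eq_zero fun β _ => if_neg (fun hh => h hh.2)
    rw [Finset.sum_congr rfl (fun α _ => h1 α), Finset.sum_ite_eq Finset.univ σ]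
    rw [if_pos (Finset.mem_univ σ)]
    rw [sum_face_indicator X (n + 1) (fun t => Ecnd X n σ.1 t)]
    unfold dG Ecnd
    norm_cast
    congr 1
    apply Finset.filter_congr
    intro τ _
    tauto
  have hs2 : (∑ e : X.face (n + 1) × X.face (n + 1),
      if Ecnd X n e.1.1 e.2.1 ∧ σ = e.2 then (1 : ℝ) else 0) = (dG X n σ.1 : ℝ) := by
    rw [Fintype.sum_prod_type_right]
    have h1 : ∀ β : X.face (n + 1),
        (∑ α : X.face (n + 1), if Ecnd X n α.1 β.1 ∧ σ = β then (1 : ℝ) else 0)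
          = if σ = β then (∑ α : X.face (n + 1), if Ecnd X n α.1 β.1 then (1 : ℝ) else 0)
            else 0 := by
      intro β
      by_cases h : σ = β
      · subst h
        rw [if_pos rfl]
        exact Finset.sum_congr rfl fun α _ => by rw [if_congr (and_iff_left rfl) rfl rfl]
      · rw [if_neg h]
        exact Finset.sum_eq_zero fun α _ => if_neg (fun hh => h hh.2)
    rw [Finset.sum_congr rfl (fun β _ => h1 β), Finset.sum_ite_eq Finset.univ σ]
    rw [if_pos (Finset.mem_univ σ)]
    have h2 : ∀ α : X.face (n + 1),
        (if Ecnd X n α.1 σ.1 then (1 : ℝ) else 0) = if Ecnd X n σ.1 α.1 then (1 : ℝ) else 0 :=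
      fun α => if_congr ⟨fun h => Ecnd_symm X n h, fun h => Ecnd_symm X n h⟩ rfl rfl
    rw [Finset.sum_congr rfl (fun α _ => h2 α),
      sum_face_indicator X (n + 1) (fun t => Ecnd X n σ.1 t)]
    unfold dG Ecnd
    norm_cast
    congr 1
    apply Finset.filter_congr
    intro τ _
    tauto
  rw [hs1, hs2, smul_eq_mul]
  ring

end Bochner

end Aux

/-- Bochner-type decomposition of the reduced `k`-Laplacian
(`k = m - 1 ≥ 0`): `L_k = D_k + K_k` with `K_k` positive semi-definite and `D_k`
diagonal with entries `2(k+1) + (k+2)·deg(σ) - Σ_{τ ∈ σ(k-1)} deg(τ)`. -/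
theorem laplacian_decomposition {V : Type} [Fintype V] [DecidableEq V] [LinearOrder V]
    (X : SC V) (m : ℕ) (hm : 1 ≤ m) :
    ∃ K : Matrix (X.face m) (X.face m) ℝ, K.PosSemidef ∧
      X.Lap m = Matrix.diagonal (fun σ =>
        2 * (m : ℝ) + ((m : ℝ) + 1) * (X.deg σ.1 : ℝ)
          - ∑ u ∈ σ.1, (X.deg (σ.1.erase u) : ℝ)) + K := by
  obtain ⟨n, rfl⟩ : ∃ n, m = n + 1 := ⟨m - 1, by omega⟩
  refine ⟨(1/2 : ℝ) • (Bochner.H X n * (Bochner.H X n)ᵀ), Bochner.K_psd X n, ?_⟩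
  have hL : X.Lap (n + 1) = (X.CB (n + 1))ᵀ * X.CB (n + 1) + X.CB n * (X.CB n)ᵀ := rfl
  rw [hL]
  ext σ τ
  rw [Matrix.add_apply, Matrix.add_apply]
  by_cases hst : σ = τ
  · subst hst
    rw [Matrix.diagonal_apply_eq, Bochner.up_diag, Bochner.down_diag, Bochner.K_diag]
    have h1 : ∑ u ∈ σ.1, X.deg (σ.1.erase u)
        = (n + 1) + ((n + 1) * X.deg σ.1 + Bochner.dG X n σ.1) := by
      rw [Bochner.sum_deg_erase X n σ.2.1 σ.2.2, Bochner.count_split,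
        Bochner.count_A X n σ.2.1 σ.2.2]
    have h2 : ∑ u ∈ σ.1, (X.deg (σ.1.erase u) : ℝ)
        = (((n + 1) + ((n + 1) * X.deg σ.1 + Bochner.dG X n σ.1) : ℕ) : ℝ) := by
      rw [← Nat.cast_sum, h1]
    rw [h2]
    push_cast
    ring
  · have hne1 : σ.1 ≠ τ.1 := fun h => hst (Subtype.ext h)
    rw [Matrix.diagonal_apply_ne _ hst, zero_add]
    have hle : (σ.1 ∩ τ.1).card ≤ n := by
      have hsub : σ.1 ∩ τ.1 ⊆ σ.1 := Finset.inter_subset_left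
      have hb : (σ.1 ∩ τ.1).card ≤ n + 1 := by
        have := Finset.card_le_card hsub
        have := σ.2.2
        omega
      by_contra hgt
      push_neg at hgt
      have hcard : σ.1.card ≤ (σ.1 ∩ τ.1).card := by
        have := σ.2.2; omega
      have heq : σ.1 ∩ τ.1 = σ.1 := Finset.eq_of_subset_of_card_le hsub hcard
      have hsub2 : σ.1 ⊆ τ.1 := by rw [← heq]; exact Finset.inter_subset_right
      have : σ.1 = τ.1 := Finset.eq_of_subset_of_card_le hsub2
        (by rw [σ.2.2, τ.2.2])
      exact hne1 this
    rcases eq_or_lt_of_le hle with hn | hn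
    · rw [Bochner.up_offdiag_n X n σ τ hn, Bochner.down_offdiag_n X n σ τ hn,
        Bochner.K_offdiag X n σ τ hst]
      by_cases hU : σ.1 ∪ τ.1 ∈ X.faces
      · rw [if_pos hU, if_neg (fun h => h.2 hU)]
        obtain ⟨a, b, ha, hb, hab, hσi, hτi, hUi⟩ :=
          Bochner.pair_struct (n := n) σ.2.2 τ.2.2 hn
        set ρ := σ.1 ∩ τ.1 with hρ
        have hkey := Bochner.sign_key ρ a b ha hb hab
        rw [hUi, hσi, hτi]
        linear_combination hkey
      · rw [if_neg hU, if_pos ⟨hn, hU⟩, zero_add]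
    · rw [Bochner.up_offdiag_far X n σ τ hn, Bochner.down_offdiag_far X n σ τ hn,
        Bochner.K_offdiag X n σ τ hst, if_neg (fun h => absurd h.1 (Nat.ne_of_lt hn))]
      norm_num
end

section
/- Let X be a finite simplicial complex and suppose the reduced k-Laplacian L_k = D_k + K_k where K_k is positive semi-definite and D_k is diagonal with D_k(σ,σ) = 2(k+1) + (k+2)deg_X(σ) − Σ_{τ ∈ σ(k−1)} deg_X(τ). Then μ_k(X) ≥ min over σ ∈ X(k) of ((k+2)deg_X(σ) + 2(k+1) − Σ_{τ ∈ σ(k−1)} deg_X(τ)). -/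
open Matrix BigOperators

/-- If the reduced `k`-Laplacian (`k = m - 1 ≥ 0`) decomposes as
`L_k = D_k + K_k` with `K_k` positive semi-definite and `D_k` diagonal with entries
`2(k+1) + (k+2)·deg(σ) - Σ_{τ ∈ σ(k-1)} deg(τ)`, then every eigenvalue `μ` of `L_k`
satisfies `μ ≥ min_{σ ∈ X(k)} ((k+2)·deg(σ) + 2(k+1) - Σ_{τ ∈ σ(k-1)} deg(τ))`. -/
theorem laplacian_decomposition_bound {V : Type} [Fintype V] [DecidableEq V] [LinearOrder V]
    (X : SC V) (m : ℕ) (hm : 1 ≤ m) (K : Matrix (X.face m) (X.face m) ℝ)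
    (hK : K.PosSemidef)
    (hdecomp : X.Lap m = Matrix.diagonal (fun σ =>
        2 * (m : ℝ) + ((m : ℝ) + 1) * (X.deg σ.1 : ℝ)
          - ∑ u ∈ σ.1, (X.deg (σ.1.erase u) : ℝ)) + K)
    (μ : ℝ) (hμ : μ ∈ X.eigenvals m) :
    ∃ σ : X.face m,
      ((m : ℝ) + 1) * (X.deg σ.1 : ℝ) + 2 * (m : ℝ)
        - ∑ u ∈ σ.1, (X.deg (σ.1.erase u) : ℝ) ≤ μ := by
  classical
  set d : X.face m → ℝ := fun σ =>
    2 * (m : ℝ) + ((m : ℝ) + 1) * (X.deg σ.1 : ℝ)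
      - ∑ u ∈ σ.1, (X.deg (σ.1.erase u) : ℝ) with hd
  obtain ⟨v, hv_mem, hv0⟩ := hμ.exists_hasEigenvector
  have hmul : (X.Lap m).mulVec v = μ • v := by
    have := hv_mem
    rw [Module.End.mem_eigenspace_iff] at this
    simpa [Matrix.toLin'_apply] using this
  obtain ⟨i0, hi0⟩ : ∃ i, v i ≠ 0 := Function.ne_iff.mp hv0
  obtain ⟨σ₀, -, hσ₀⟩ := Finset.exists_min_image Finset.univ d
    ⟨i0, Finset.mem_univ i0⟩
  refine ⟨σ₀, ?_⟩
  have hS : 0 < v ⬝ᵥ v := by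
    have : v ⬝ᵥ v = ∑ i, v i * v i := rfl
    rw [this]
    apply Finset.sum_pos' (fun i _ => mul_self_nonneg (v i))
    exact ⟨i0, Finset.mem_univ i0, mul_self_pos.mpr hi0⟩
  have key : μ * (v ⬝ᵥ v) = v ⬝ᵥ (X.Lap m).mulVec v := by
    rw [hmul, dotProduct_smul]; ring_nf
  have hKv : 0 ≤ v ⬝ᵥ K.mulVec v := by
    simpa using hK.dotProduct_mulVec_nonneg v
  have hDiag : v ⬝ᵥ (Matrix.diagonal d).mulVec v = ∑ i, d i * (v i * v i) := by
    simp [dotProduct, Matrix.mulVec_diagonal]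
    exact Finset.sum_congr rfl fun i _ => by ring
  have hlow : d σ₀ * (v ⬝ᵥ v) ≤ v ⬝ᵥ (X.Lap m).mulVec v := by
    rw [hdecomp, Matrix.add_mulVec, dotProduct_add]
    have h1 : d σ₀ * (v ⬝ᵥ v) ≤ v ⬝ᵥ (Matrix.diagonal d).mulVec v := by
      rw [hDiag]
      have : d σ₀ * (v ⬝ᵥ v) = ∑ i, d σ₀ * (v i * v i) := by
        rw [← Finset.mul_sum]; rfl
      rw [this]
      exact Finset.sum_le_sum fun i _ =>
        mul_le_mul_of_nonneg_right (hσ₀ i (Finset.mem_univ i)) (mul_self_nonneg _)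
    linarith
  have : d σ₀ * (v ⬝ᵥ v) ≤ μ * (v ⬝ᵥ v) := by rw [key]; exact hlow
  have hfin : d σ₀ ≤ μ := le_of_mul_le_mul_right (by linarith) hS
  calc ((m : ℝ) + 1) * (X.deg σ₀.1 : ℝ) + 2 * (m : ℝ)
        - ∑ u ∈ σ₀.1, (X.deg (σ₀.1.erase u) : ℝ) = d σ₀ := by rw [hd]; ring
    _ ≤ μ := hfin
end
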